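/- arXiv:1710.00374 — 4 statements merged into one kernel-verified Lean document; each statement's English description precedes it below -/
import Mathlib

section
/- Let ε > 0, let ℓ ≥ 2, and let F be a (0,1)-matrix. Let A be an m-rowed simple 3-matrix with εm > 1, containing no member of 𝒯_ℓ(3) \ 𝒯_ℓ(2) as a configuration, such that every column of A contains at least one 0 and at least one 1, and every column of A has at least εm entries belonging to {0,1}. If the number of columns of A exceeds 2 · forbmax(m−2, 3, (𝒯_ℓ(3) \ 𝒯_ℓ(2)) ∪ {F}) · C(m,2)/(εm − 1), then 0×1×F ≺ A. -/
/-- A matrix with natural number entries, of size `k × p`. -/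
abbrev MatN (k p : ℕ) := Matrix (Fin k) (Fin p) ℕ

/-- A matrix bundled with its dimensions. -/
structure CMat where
  rows : ℕ
  cols : ℕ
  mat : MatN rows cols

/-- A matrix is simple if no two of its columns are equal. -/
def SimpleM {m n : ℕ} (A : MatN m n) : Prop :=
  ∀ j₁ j₂ : Fin n, (∀ i, A i j₁ = A i j₂) → j₁ = j₂

/-- An `r`-matrix: all entries lie in `{0, 1, …, r-1}`. -/
def RMat (r : ℕ) {m n : ℕ} (A : MatN m n) : Prop := ∀ i j, A i j < r

/-- `F` is a configuration of `A` (written `F ≺ A`): some submatrix of `A` is a row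
and column permutation of `F`; equivalently there are injections of the rows and
columns of `F` into those of `A` realizing the entries of `F`. -/
def IsConfig {k p m n : ℕ} (F : MatN k p) (A : MatN m n) : Prop :=
  ∃ f : Fin k → Fin m, ∃ g : Fin p → Fin n,
    Function.Injective f ∧ Function.Injective g ∧ ∀ i j, A (f i) (g j) = F i j

/-- `A` avoids every matrix of the family `𝓕` as a configuration. -/
def AvoidsFam {m n : ℕ} (A : MatN m n) (𝓕 : Set CMat) : Prop :=
  ∀ F ∈ 𝓕, ¬ IsConfig F.mat A

/-- `forb m r 𝓕`: the maximum number of columns of an `m`-rowed simple `r`-matrix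
having no member of `𝓕` as a configuration. -/
noncomputable def forb (m r : ℕ) (𝓕 : Set CMat) : ℕ :=
  sSup { n : ℕ | ∃ A : MatN m n, RMat r A ∧ SimpleM A ∧ AvoidsFam A 𝓕 }

/-- `forbmax m r 𝓕`: the maximum of `forb m' r 𝓕` over `m' ≤ m`. -/
noncomputable def forbmax (m r : ℕ) (𝓕 : Set CMat) : ℕ :=
  sSup { x : ℕ | ∃ m' ≤ m, x = forb m' r 𝓕 }

/-- The number of 1's in column `j` of `A` (the column sum). -/
def colSum {m n : ℕ} (A : MatN m n) (j : Fin n) : ℕ :=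
  (Finset.univ.filter (fun i => A i j = 1)).card

/-- `forbK k m r 𝓕`: as `forb`, but restricted to matrices all of whose columns
have exactly `k` entries equal to 1. -/
noncomputable def forbK (k m r : ℕ) (𝓕 : Set CMat) : ℕ :=
  sSup { n : ℕ | ∃ A : MatN m n, RMat r A ∧ SimpleM A ∧ (∀ j, colSum A j = k) ∧
    AvoidsFam A 𝓕 }

/-- `forbmaxK k m r 𝓕`: the maximum of `forbK k m' r 𝓕` over `m' ≤ m`. -/
noncomputable def forbmaxK (k m r : ℕ) (𝓕 : Set CMat) : ℕ :=
  sSup { x : ℕ | ∃ m' ≤ m, x = forbK k m' r 𝓕 }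

/-- `Imat ℓ a b`: the `ℓ × ℓ` matrix with `a` on the diagonal and `b` off the diagonal. -/
def Imat (ℓ a b : ℕ) : MatN ℓ ℓ := fun i j => if i = j then a else b

/-- `Tmat ℓ a b`: the `ℓ × ℓ` matrix with `a` below the diagonal and `b` on or above it. -/
def Tmat (ℓ a b : ℕ) : MatN ℓ ℓ := fun i j => if (j : ℕ) < (i : ℕ) then a else b

/-- `Tmat3 ℓ a b c`: the `ℓ × ℓ` matrix with `a` below, `b` on, and `c` above the diagonal. -/
def Tmat3 (ℓ a b c : ℕ) : MatN ℓ ℓ :=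
  fun i j => if (j : ℕ) < (i : ℕ) then a else if i = j then b else c

/-- The family `𝒯_ℓ(r)` of all `I_ℓ(a,b)` and `T_ℓ(a,b)` with `a,b ∈ {0,…,r-1}`, `a ≠ b`. -/
def TFam (ℓ r : ℕ) : Set CMat :=
  { M | ∃ a b : ℕ, a < r ∧ b < r ∧ a ≠ b ∧
      (M = ⟨ℓ, ℓ, Imat ℓ a b⟩ ∨ M = ⟨ℓ, ℓ, Tmat ℓ a b⟩) }

/-- `t·F`: the concatenation of `t` copies of `F` side by side. -/
def tcopies {k p : ℕ} (t : ℕ) (F : MatN k p) : MatN k (t * p) :=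
  fun i j => F i ⟨(j : ℕ) % p, Nat.mod_lt _ (by
    rcases Nat.eq_zero_or_pos p with h | h
    · exact absurd j.isLt (by simp [h])
    · exact h)⟩

/-- `0×1×F`: `F` with an extra row of 0's and an extra row of 1's appended. -/
def zeroOneTop {k p : ℕ} (F : MatN k p) : MatN (k + 2) p :=
  fun i j => if h : (i : ℕ) < k then F ⟨i, h⟩ j else if (i : ℕ) = k then 0 else 1

/-- `F_{a,b,c,d}`: the `(a+b+c+d) × 2` matrix with `a` rows `[1 1]`, `b` rows `[1 0]`,
`c` rows `[0 1]` and `d` rows `[0 0]`. -/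
def Fabcd (a b c d : ℕ) : MatN (a + b + c + d) 2 :=
  fun i j =>
    if (i : ℕ) < a then 1
    else if (i : ℕ) < a + b then (if (j : ℕ) = 0 then 1 else 0)
    else if (i : ℕ) < a + b + c then (if (j : ℕ) = 0 then 0 else 1)
    else 0

lemma simple_le_pow {r m n : ℕ} (A : MatN m n) (hr : RMat r A) (hs : SimpleM A) :
    n ≤ r ^ m := by
  have hinj : Function.Injective
      (fun j : Fin n => (fun i : Fin m => (⟨A i j, hr i j⟩ : Fin r))) := by
    intro j₁ j₂ h
    apply hs
    intro i
    have := congrFun h i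
    simpa [Fin.mk.injEq] using this
  have := Fintype.card_le_of_injective _ hinj
  simpa [Fintype.card_fun] using this

lemma le_forb {m n r : ℕ} {𝓕 : Set CMat} (A : MatN m n) (h1 : RMat r A)
    (h2 : SimpleM A) (h3 : AvoidsFam A 𝓕) : n ≤ forb m r 𝓕 := by
  apply le_csSup
  · exact ⟨r ^ m, fun x ⟨B, hB1, hB2, _⟩ => simple_le_pow B hB1 hB2⟩
  · exact ⟨A, h1, h2, h3⟩

lemma forb_le_pow (m r : ℕ) (𝓕 : Set CMat) : forb m r 𝓕 ≤ r ^ m := by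
  unfold forb
  rcases Set.eq_empty_or_nonempty
      { n : ℕ | ∃ A : MatN m n, RMat r A ∧ SimpleM A ∧ AvoidsFam A 𝓕 } with h | h
  · rw [h]; simp
  · exact csSup_le h (fun x ⟨B, hB1, hB2, _⟩ => simple_le_pow B hB1 hB2)

lemma forb_le_forbmax (m r : ℕ) (hr : 1 ≤ r) (𝓕 : Set CMat) :
    forb m r 𝓕 ≤ forbmax m r 𝓕 := by
  apply le_csSup
  · refine ⟨r ^ m, ?_⟩
    rintro x ⟨m', hm', rfl⟩
    exact (forb_le_pow m' r 𝓕).trans (Nat.pow_le_pow_right hr hm')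
  · exact ⟨m, le_rfl, rfl⟩

lemma two_mul_choose_two (m : ℕ) : 2 * Nat.choose m 2 = m * (m - 1) := by
  induction m with
  | zero => simp
  | succ mm ih =>
    rw [Nat.choose_succ_succ, Nat.choose_one_right, Nat.mul_add, ih]
    cases mm with
    | zero => simp
    | succ q => simp only [Nat.succ_sub_one]; ring

lemma config_trans {k p m n m' n' : ℕ} (F : MatN k p) (A : MatN m n)
    (e : Fin m' → Fin m) (g : Fin n' → Fin n)
    (he : Function.Injective e) (hg : Function.Injective g)
    (h : IsConfig F (fun i j => A (e i) (g j))) : IsConfig F A := by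
  obtain ⟨f, g', hf, hg', hval⟩ := h
  exact ⟨e ∘ f, g ∘ g', he.comp hf, hg.comp hg', hval⟩

/-- Let `ε > 0`, `ℓ ≥ 2`, `F` a (0,1)-matrix, and `A` an `m`-rowed
simple 3-matrix with `εm > 1`, avoiding `𝒯_ℓ(3) \ 𝒯_ℓ(2)`, each column containing a 0
and a 1 and having at least `εm` entries in `{0,1}`. If `A` has more than
`2·forbmax(m-2, 3, (𝒯_ℓ(3)\𝒯_ℓ(2)) ∪ {F})·C(m,2)/(εm-1)` columns, then `0×1×F ≺ A`. -/
theorem stmt13 (ε : ℝ) (hε : 0 < ε) (ℓ : ℕ) (hℓ : 2 ≤ ℓ) (k p : ℕ)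
    (F : MatN k p) (hF : RMat 2 F)
    (m n : ℕ) (A : MatN m n) (hεm : 1 < ε * m)
    (hA3 : RMat 3 A) (hsimple : SimpleM A)
    (havoid : AvoidsFam A (TFam ℓ 3 \ TFam ℓ 2))
    (h0 : ∀ j : Fin n, ∃ i : Fin m, A i j = 0)
    (h1 : ∀ j : Fin n, ∃ i : Fin m, A i j = 1)
    (h01 : ∀ j : Fin n,
      ε * m ≤ ((Finset.univ.filter fun i : Fin m => A i j = 0 ∨ A i j = 1).card : ℝ))
    (hcols : 2 * (forbmax (m - 2) 3 ((TFam ℓ 3 \ TFam ℓ 2) ∪ {⟨k, p, F⟩}) : ℝ) *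
        (Nat.choose m 2 : ℝ) / (ε * m - 1) < (n : ℝ)) :
    IsConfig (zeroOneTop F) A := by
  classical
  set 𝓕' : Set CMat := (TFam ℓ 3 \ TFam ℓ 2) ∪ {⟨k, p, F⟩} with h𝓕'
  set B : ℕ := forbmax (m - 2) 3 𝓕' with hB
  have hεm1 : (0:ℝ) < ε * m - 1 := by linarith
  have hprod : 2 * (B : ℝ) * (Nat.choose m 2 : ℝ) < (n : ℝ) * (ε * m - 1) := by
    have := (div_lt_iff₀ hεm1).mp hcols
    linarith
  -- Key counting claim
  have key : ∃ r s : Fin m, r ≠ s ∧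
      B < (Finset.univ.filter fun j => A r j = 0 ∧ A s j = 1).card := by
    by_contra hcon
    push_neg at hcon
    -- every off-diagonal pair has count ≤ B
    have hle : ∀ rs : Fin m × Fin m,
        (Finset.univ.filter fun j => A rs.1 j = 0 ∧ A rs.2 j = 1).card ≤ B := by
      intro ⟨r, s⟩
      by_cases hrs : r = s
      · subst hrs
        have : (Finset.univ.filter fun j => A r j = 0 ∧ A r j = 1) = ∅ := by
          apply Finset.filter_eq_empty_iff.mpr
          rintro j - ⟨h0', h1'⟩; omega
        simp [this]
      · exact hcon r s hrs
    -- but only off-diagonal pairs have nonzero count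
    have hdiag : ∀ rs : Fin m × Fin m, rs.1 = rs.2 →
        (Finset.univ.filter fun j => A rs.1 j = 0 ∧ A rs.2 j = 1).card = 0 := by
      intro rs h
      rw [Finset.card_eq_zero, Finset.filter_eq_empty_iff]
      intro j _
      rw [h]
      rintro ⟨h0', h1'⟩
      omega
    -- sum over all pairs equals sum over offDiag
    have hsum_eq : ∑ rs ∈ (Finset.univ : Finset (Fin m × Fin m)),
        (Finset.univ.filter fun j => A rs.1 j = 0 ∧ A rs.2 j = 1).card
        = ∑ rs ∈ (Finset.univ : Finset (Fin m)).offDiag,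
        (Finset.univ.filter fun j => A rs.1 j = 0 ∧ A rs.2 j = 1).card := by
      symm
      apply Finset.sum_subset (Finset.subset_univ _)
      intro x _ hx
      apply hdiag
      by_contra hne
      exact hx (Finset.mem_offDiag.mpr ⟨Finset.mem_univ _, Finset.mem_univ _, hne⟩)
    have hsum_le : ∑ rs ∈ (Finset.univ : Finset (Fin m × Fin m)),
        (Finset.univ.filter fun j => A rs.1 j = 0 ∧ A rs.2 j = 1).card
        ≤ (m * m - m) * B := by
      rw [hsum_eq]
      calc ∑ rs ∈ (Finset.univ : Finset (Fin m)).offDiag,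
          (Finset.univ.filter fun j => A rs.1 j = 0 ∧ A rs.2 j = 1).card
          ≤ (Finset.univ : Finset (Fin m)).offDiag.card * B := by
            rw [← smul_eq_mul]
            exact Finset.sum_le_card_nsmul _ _ _ (fun x _ => hle x)
        _ = (m * m - m) * B := by rw [Finset.offDiag_card]; simp
    -- swap the sum: it equals ∑_j z_j * o_j
    have hswap : ∑ rs ∈ (Finset.univ : Finset (Fin m × Fin m)),
        (Finset.univ.filter fun j => A rs.1 j = 0 ∧ A rs.2 j = 1).card
        = ∑ j : Fin n, (Finset.univ.filter fun i => A i j = 0).card *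
            (Finset.univ.filter fun i => A i j = 1).card := by
      have hperj : ∀ j : Fin n,
          (Finset.univ.filter (fun rs : Fin m × Fin m => A rs.1 j = 0 ∧ A rs.2 j = 1)).card
          = (Finset.univ.filter fun i => A i j = 0).card *
            (Finset.univ.filter fun i => A i j = 1).card := by
        intro j
        rw [← Finset.card_product]
        congr 1
        ext ⟨a, b⟩
        simp [Finset.mem_filter]
      calc ∑ rs ∈ (Finset.univ : Finset (Fin m × Fin m)),
          (Finset.univ.filter fun j => A rs.1 j = 0 ∧ A rs.2 j = 1).card
          = ∑ rs ∈ (Finset.univ : Finset (Fin m × Fin m)), ∑ j : Fin n,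
              if A rs.1 j = 0 ∧ A rs.2 j = 1 then 1 else 0 := by
            simp only [Finset.card_filter]
        _ = ∑ j : Fin n, ∑ rs ∈ (Finset.univ : Finset (Fin m × Fin m)),
              if A rs.1 j = 0 ∧ A rs.2 j = 1 then 1 else 0 := Finset.sum_comm
        _ = ∑ j : Fin n,
              (Finset.univ.filter (fun rs : Fin m × Fin m =>
                A rs.1 j = 0 ∧ A rs.2 j = 1)).card := by
            simp only [Finset.card_filter]
        _ = ∑ j : Fin n, (Finset.univ.filter fun i => A i j = 0).card *
              (Finset.univ.filter fun i => A i j = 1).card := by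
            simp only [hperj]
    -- per-column lower bound in ℝ
    have hcol : ∀ j : Fin n, ε * m - 1 ≤
        ((Finset.univ.filter fun i => A i j = 0).card *
          (Finset.univ.filter fun i => A i j = 1).card : ℝ) := by
      intro j
      set z := (Finset.univ.filter fun i => A i j = 0).card with hz
      set o := (Finset.univ.filter fun i => A i j = 1).card with ho
      have hz1 : 1 ≤ z := by
        obtain ⟨i, hi⟩ := h0 j
        exact Finset.card_pos.mpr ⟨i, Finset.mem_filter.mpr ⟨Finset.mem_univ _, hi⟩⟩
      have ho1 : 1 ≤ o := by
        obtain ⟨i, hi⟩ := h1 j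
        exact Finset.card_pos.mpr ⟨i, Finset.mem_filter.mpr ⟨Finset.mem_univ _, hi⟩⟩
      have hsum : ε * m ≤ (z : ℝ) + (o : ℝ) := by
        have hdisj : Disjoint (Finset.univ.filter fun i => A i j = 0)
            (Finset.univ.filter fun i => A i j = 1) := by
          rw [Finset.disjoint_left]
          intro i hi0 hi1
          have := (Finset.mem_filter.mp hi0).2
          have := (Finset.mem_filter.mp hi1).2
          omega
        have hun : (Finset.univ.filter fun i : Fin m => A i j = 0 ∨ A i j = 1)
            = (Finset.univ.filter fun i => A i j = 0) ∪
              (Finset.univ.filter fun i => A i j = 1) := by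
          rw [Finset.filter_or]
        have := h01 j
        rw [hun, Finset.card_union_of_disjoint hdisj] at this
        push_cast at this
        linarith
      have hz1' : (1:ℝ) ≤ (z : ℝ) := by exact_mod_cast hz1
      have ho1' : (1:ℝ) ≤ (o : ℝ) := by exact_mod_cast ho1
      push_cast
      nlinarith
    -- combine
    have htotal : (n : ℝ) * (ε * m - 1) ≤
        ((m * m - m) * B : ℕ) := by
      calc (n : ℝ) * (ε * m - 1)
          = (Finset.univ : Finset (Fin n)).card • (ε * m - 1) := by
            simp [nsmul_eq_mul]
        _ ≤ ∑ j : Fin n, ((Finset.univ.filter fun i => A i j = 0).card *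
              (Finset.univ.filter fun i => A i j = 1).card : ℝ) :=
            Finset.card_nsmul_le_sum _ _ _ (fun j _ => hcol j)
        _ = ((∑ j : Fin n, (Finset.univ.filter fun i => A i j = 0).card *
              (Finset.univ.filter fun i => A i j = 1).card : ℕ) : ℝ) := by
            push_cast; ring_nf
        _ ≤ ((m * m - m) * B : ℕ) := by
            exact_mod_cast (hswap ▸ hsum_le)
    have hmm : m * m - m = 2 * Nat.choose m 2 := by
      rw [two_mul_choose_two]
      have : m * m = m * (m - 1) + m := by
        cases m with
        | zero => simp
        | succ q => simp only [Nat.succ_sub_one]; ring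
      omega
    rw [hmm] at htotal
    push_cast at htotal
    linarith
  obtain ⟨r, s, hrs, hT⟩ := key
  set T : Finset (Fin n) := Finset.univ.filter fun j => A r j = 0 ∧ A s j = 1 with hTdef
  set S : Finset (Fin m) := ({r, s} : Finset (Fin m))ᶜ with hSdef
  have hScard : S.card = m - 2 := by
    rw [hSdef, Finset.card_compl, Finset.card_insert_of_notMem (by simp [hrs]),
      Finset.card_singleton, Fintype.card_fin]
  let e0 := S.orderIsoOfFin hScard
  let g0 := T.orderIsoOfFin rfl
  set e : Fin (m - 2) → Fin m := fun i => (e0 i : Fin m) with he_def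
  set g : Fin T.card → Fin n := fun j => (g0 j : Fin n) with hg_def
  have he_inj : Function.Injective e := by
    intro a b h
    exact e0.injective (Subtype.ext h)
  have hg_inj : Function.Injective g := by
    intro a b h
    exact g0.injective (Subtype.ext h)
  have he_mem : ∀ i, e i ≠ r ∧ e i ≠ s := by
    intro i
    have h2 : e i ∉ ({r, s} : Finset (Fin m)) := Finset.mem_compl.mp ((e0 i).2)
    simp only [Finset.mem_insert, Finset.mem_singleton] at h2
    push_neg at h2
    exact h2
  have he_surj : ∀ i : Fin m, i ≠ r → i ≠ s → ∃ i', e i' = i := by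
    intro i h1' h2'
    have hi : i ∈ S := Finset.mem_compl.mpr (by simp [h1', h2'])
    exact ⟨e0.symm ⟨i, hi⟩, congrArg Subtype.val (e0.apply_symm_apply ⟨i, hi⟩)⟩
  have hg_mem : ∀ j, A r (g j) = 0 ∧ A s (g j) = 1 := by
    intro j
    have h2 : g j ∈ Finset.univ.filter fun j' => A r j' = 0 ∧ A s j' = 1 := (g0 j).2
    exact (Finset.mem_filter.mp h2).2
  set A' : MatN (m - 2) T.card := fun i j => A (e i) (g j) with hA'def
  have hA'3 : RMat 3 A' := fun i j => hA3 _ _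
  have hA'simple : SimpleM A' := by
    intro j₁ j₂ hcoleq
    apply hg_inj
    apply hsimple
    intro i
    by_cases h1' : i = r
    · subst h1'; rw [(hg_mem j₁).1, (hg_mem j₂).1]
    by_cases h2' : i = s
    · subst h2'; rw [(hg_mem j₁).2, (hg_mem j₂).2]
    obtain ⟨i', rfl⟩ := he_surj i h1' h2'
    exact hcoleq i'
  have hnotavoid : ¬ AvoidsFam A' 𝓕' := by
    intro hav
    have h1' : T.card ≤ forb (m - 2) 3 𝓕' := le_forb A' hA'3 hA'simple hav
    have h2' : forb (m - 2) 3 𝓕' ≤ B := hB ▸ forb_le_forbmax (m - 2) 3 (by norm_num) 𝓕'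
    omega
  rw [AvoidsFam] at hnotavoid
  push_neg at hnotavoid
  obtain ⟨F', hF'mem, hF'cfg⟩ := hnotavoid
  rw [h𝓕', Set.mem_union] at hF'mem
  rcases hF'mem with hF'mem | hF'mem
  · exact absurd (config_trans F'.mat A e g he_inj hg_inj hF'cfg)
      (havoid F' hF'mem)
  · rw [Set.mem_singleton_iff] at hF'mem
    subst hF'mem
    obtain ⟨f, g', hf, hg', hval⟩ := hF'cfg
    refine ⟨fun i => if h : (i : ℕ) < k then e (f ⟨i, h⟩)
      else if (i : ℕ) = k then r else s, fun j => g (g' j), ?_, ?_, ?_⟩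
    · intro a b hab
      by_cases ha : (a : ℕ) < k <;> by_cases hb : (b : ℕ) < k
      · simp only [dif_pos ha, dif_pos hb] at hab
        have := hf (he_inj hab)
        have := congrArg Fin.val this
        simp only [] at this
        exact Fin.ext this
      · exfalso
        simp only [dif_pos ha, dif_neg hb] at hab
        rcases (he_mem (f ⟨a, ha⟩)) with ⟨hr', hs'⟩
        split at hab
        · exact hr' hab
        · exact hs' hab
      · exfalso
        simp only [dif_neg ha, dif_pos hb] at hab
        rcases (he_mem (f ⟨b, hb⟩)) with ⟨hr', hs'⟩
        split at hab
        · exact hr' hab.symm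
        · exact hs' hab.symm
      · simp only [dif_neg ha, dif_neg hb] at hab
        by_cases hak : (a : ℕ) = k <;> by_cases hbk : (b : ℕ) = k
        · exact Fin.ext (hak.trans hbk.symm)
        · rw [if_pos hak, if_neg hbk] at hab; exact absurd hab hrs
        · rw [if_neg hak, if_pos hbk] at hab; exact absurd hab.symm hrs
        · have ha' := a.isLt; have hb' := b.isLt
          exact Fin.ext (by omega)
    · exact fun a b h => hg' (hg_inj h)
    · intro i j
      simp only [zeroOneTop]
      by_cases h : (i : ℕ) < k
      · rw [dif_pos h, dif_pos h]
        exact hval ⟨i, h⟩ j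
      · rw [dif_neg h, dif_neg h]
        by_cases hk : (i : ℕ) = k
        · rw [if_pos hk, if_pos hk]
          exact (hg_mem (g' j)).1
        · rw [if_neg hk, if_neg hk]
          exact (hg_mem (g' j)).2
end

section
/- Let r ≥ 1. There is a constant c such that for all m ≥ 1 and all k with 0 ≤ k ≤ m: if k ∉ {r+1, r+2, m−r−2, m−r−1}, then forb_k(m, 2, {F_{1,r+1,r+1,1}}) ≤ c · m^r; and if k ∈ {r+1, r+2, m−r−2, m−r−1}, then forb_k(m, 2, {F_{1,r+1,r+1,1}}) ≤ c · m^{r+1}. -/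
set_option linter.unusedSectionVars false
set_option linter.unusedVariables false
set_option linter.unreachableTactic false
set_option linter.unusedTactic false
set_option maxHeartbeats 1000000

namespace Stmt15Aux
open Finset

section SetFamilies
variable {α : Type*} [DecidableEq α]

/-- subsets of `V` of cardinality at most `z` -/
def smallSets (V : Finset α) (z : ℕ) : Finset (Finset α) :=
  V.powerset.filter (fun S => S.card ≤ z)

lemma mem_smallSets {V : Finset α} {z : ℕ} {S : Finset α} :
    S ∈ smallSets V z ↔ S ⊆ V ∧ S.card ≤ z := by
  simp [smallSets]

lemma card_smallSets (V : Finset α) (z : ℕ) :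
    (smallSets V z).card ≤ (z + 1) * (V.card + 1) ^ z := by
  have h1 : smallSets V z = (Finset.range (z+1)).biUnion (fun i => V.powersetCard i) := by
    ext S
    simp only [mem_smallSets, mem_biUnion, mem_range, mem_powersetCard]
    constructor
    · rintro ⟨h, h2⟩; exact ⟨S.card, by omega, h, rfl⟩
    · rintro ⟨i, hi, h, rfl⟩; exact ⟨h, by omega⟩
  calc (smallSets V z).card ≤ ∑ i ∈ Finset.range (z+1), (V.powersetCard i).card :=
        h1 ▸ card_biUnion_le
    _ ≤ ∑ _i ∈ Finset.range (z+1), (V.card + 1) ^ z := by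
        apply Finset.sum_le_sum
        intro i hi
        rw [card_powersetCard]
        calc V.card.choose i ≤ V.card ^ i := Nat.choose_le_pow _ _
          _ ≤ (V.card + 1) ^ i := Nat.pow_le_pow_left (by omega) _
          _ ≤ (V.card + 1) ^ z := Nat.pow_le_pow_right (by omega) (by simp at hi; omega)
    _ = (z + 1) * (V.card + 1) ^ z := by simp [mul_comm]

lemma pow_superadd {r : ℕ} (hr : 1 ≤ r) (a b : ℕ) : a ^ r + b ^ r ≤ (a + b) ^ r := by
  obtain ⟨r', rfl⟩ : ∃ r', r = r' + 1 := ⟨r - 1, by omega⟩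
  have h1 : a ^ (r' + 1) ≤ a * (a + b) ^ r' := by
    rw [pow_succ, mul_comm]
    exact Nat.mul_le_mul_left _ (Nat.pow_le_pow_left (by omega) _)
  have h2 : b ^ (r' + 1) ≤ b * (a + b) ^ r' := by
    rw [pow_succ, mul_comm]
    exact Nat.mul_le_mul_left _ (Nat.pow_le_pow_left (by omega) _)
  calc a ^ (r'+1) + b ^ (r'+1) ≤ a * (a+b)^r' + b * (a+b)^r' := add_le_add h1 h2
    _ = (a+b)^(r'+1) := by ring

/-- for two sets of equal cardinality, the two differences have equal cardinality -/
lemma card_sdiff_eq_of_card_eq {A B : Finset α} (h : A.card = B.card) :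
    (A \ B).card = (B \ A).card := by
  have h1 := card_sdiff_add_card_inter A B
  have h2 := card_sdiff_add_card_inter B A
  rw [inter_comm] at h2
  omega


lemma cluster_bound {r k : ℕ} (G : Finset (Finset α)) (V : Finset α)
    (hU : ∀ A ∈ G, A.card = k) (hV : ∀ A ∈ G, A ⊆ V)
    (hP : ∀ A ∈ G, ∀ B ∈ G, (A \ B).card ≤ r) :
    G.card ≤ 4 ^ r * (r + 1) ^ 2 * (V.card + 1) ^ r := by
  rcases G.eq_empty_or_nonempty with rfl | ⟨B₀, hB₀⟩
  · simp
  obtain ⟨Cs, hCs, hmax⟩ := Finset.exists_max_image G (fun C => (C \ B₀).card) ⟨B₀, hB₀⟩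
  set ρ := (Cs \ B₀).card with hρdef
  set Xs := B₀ \ Cs with hXsdef
  set Ys := Cs \ B₀ with hYsdef
  have hXY : ∀ C ∈ G, (B₀ \ C).card = (C \ B₀).card := fun C hC =>
    card_sdiff_eq_of_card_eq (by rw [hU B₀ hB₀, hU C hC])
  have hρr : ρ ≤ r := hP Cs hCs B₀ hB₀
  have hXscard : Xs.card = ρ := hXY Cs hCs
  have hYscard : Ys.card = ρ := rfl
  -- key decomposition of Cs \ C
  have hkey : ∀ C ∈ G, ((B₀ \ C) \ Xs).card + (Ys \ (C \ B₀)).card ≤ r := by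
    intro C hC
    have hid : Cs \ C = ((B₀ \ C) \ Xs) ∪ (Ys \ (C \ B₀)) := by
      ext x
      by_cases hx : x ∈ B₀ <;>
        simp only [mem_sdiff, mem_union, hXsdef, hYsdef, mem_sdiff] <;> tauto
    have hdisj : Disjoint ((B₀ \ C) \ Xs) (Ys \ (C \ B₀)) := by
      rw [Finset.disjoint_left]
      intro x hx1 hx2
      simp only [hYsdef, mem_sdiff] at hx1 hx2
      exact hx2.1.2 hx1.1.1
    have := hP Cs hCs C hC
    rw [hid, card_union_of_disjoint hdisj] at this
    exact this
  -- fiberwise over Q = (C \ B₀) ∩ Ys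
  have hfib : G.card = ∑ Q ∈ Ys.powerset, (G.filter fun C => (C \ B₀) ∩ Ys = Q).card := by
    apply Finset.card_eq_sum_card_fiberwise
    intro C _
    simp only [mem_coe, mem_powerset]
    exact inter_subset_right
  rw [hfib]
  have hperfiber : ∀ Q ∈ Ys.powerset,
      (G.filter fun C => (C \ B₀) ∩ Ys = Q).card ≤
        2 ^ r * ((r + 1) * (r + 1) * (V.card + 1) ^ r) := by
    intro Q hQmem
    rw [mem_powerset] at hQmem
    set j := Q.card with hjdef
    have hjρ : j ≤ ρ := by rw [hjdef, ← hYscard]; exact card_le_card hQmem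
    set a := r - ρ + j with hadef
    set b := ρ - j with hbdef
    have hcard : (G.filter fun C => (C \ B₀) ∩ Ys = Q).card ≤
        (Xs.powerset ×ˢ smallSets V a ×ˢ smallSets V b).card := by
      apply Finset.card_le_card_of_injOn
        (fun C => ((B₀ \ C) ∩ Xs, (B₀ \ C) \ Xs, (C \ B₀) \ Ys))
      · intro C hC
        rw [mem_coe, mem_filter] at hC
        obtain ⟨hCG, hCQ⟩ := hC
        simp only [mem_coe, mem_product, mem_powerset, mem_smallSets]
        have hYQ : Ys \ (C \ B₀) = Ys \ Q := by
          rw [← hCQ]; ext x; simp only [mem_sdiff, mem_inter]; tauto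
        have hYQcard : (Ys \ (C \ B₀)).card = ρ - j := by
          rw [hYQ, card_sdiff_of_subset hQmem, hYscard]
        have hCQ' : Q ⊆ C \ B₀ := by rw [← hCQ]; exact inter_subset_left
        refine ⟨inter_subset_right, ⟨?_, ?_⟩, ?_, ?_⟩
        · intro x hx
          rw [mem_sdiff] at hx
          exact hV B₀ hB₀ (mem_sdiff.mp hx.1).1
        · have := hkey C hCG
          omega
        · intro x hx
          rw [mem_sdiff, mem_sdiff] at hx
          exact hV C hCG hx.1.1
        · have h1 : ((C \ B₀) \ Ys).card = (C \ B₀).card - j := by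
            have : (C \ B₀) \ Ys = (C \ B₀) \ Q := by
              rw [← hCQ]; ext x; simp only [mem_sdiff, mem_inter]; tauto
            rw [this, card_sdiff_of_subset hCQ']
          have h2 : (C \ B₀).card ≤ ρ := hmax C hCG
          omega
      · intro C hC C' hC' heq
        rw [mem_coe, mem_filter] at hC hC'
        simp only [Prod.mk.injEq] at heq
        obtain ⟨h1, h2, h3⟩ := heq
        have hBC : B₀ \ C = B₀ \ C' := by
          have e1 : B₀ \ C = ((B₀ \ C) ∩ Xs) ∪ ((B₀ \ C) \ Xs) := by
            ext x; simp only [mem_union, mem_inter, mem_sdiff]; tauto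
          have e2 : B₀ \ C' = ((B₀ \ C') ∩ Xs) ∪ ((B₀ \ C') \ Xs) := by
            ext x; simp only [mem_union, mem_inter, mem_sdiff]; tauto
          rw [e1, e2, h1, h2]
        have hCB : C \ B₀ = C' \ B₀ := by
          have e1 : C \ B₀ = ((C \ B₀) ∩ Ys) ∪ ((C \ B₀) \ Ys) := by
            ext x; simp only [mem_union, mem_inter, mem_sdiff]; tauto
          have e2 : C' \ B₀ = ((C' \ B₀) ∩ Ys) ∪ ((C' \ B₀) \ Ys) := by
            ext x; simp only [mem_union, mem_inter, mem_sdiff]; tauto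
          rw [e1, e2, h3, hC.2, hC'.2]
        -- reconstruct C from B₀ \ C and C \ B₀
        have : ∀ D : Finset α, D = (B₀ \ (B₀ \ D)) ∪ (D \ B₀) := by
          intro D; ext x; simp only [mem_union, mem_sdiff]; tauto
        rw [this C, this C', hBC, hCB]
    have hprod : (Xs.powerset ×ˢ smallSets V a ×ˢ smallSets V b).card ≤
        2 ^ r * ((r + 1) * (r + 1) * (V.card + 1) ^ r) := by
      rw [card_product, card_product, card_powerset, hXscard]
      have hsa := card_smallSets V a
      have hsb := card_smallSets V b
      have hab : a + b = r := by omega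
      have haa : a + 1 ≤ r + 1 := by omega
      have hbb : b + 1 ≤ r + 1 := by omega
      calc 2 ^ ρ * ((smallSets V a).card * (smallSets V b).card)
          ≤ 2 ^ r * (((a+1) * (V.card+1)^a) * ((b+1) * (V.card+1)^b)) := by
            apply Nat.mul_le_mul (Nat.pow_le_pow_right (by norm_num) hρr)
            exact Nat.mul_le_mul hsa hsb
        _ = 2 ^ r * ((a+1)*(b+1) * ((V.card+1)^a * (V.card+1)^b)) := by ring
        _ = 2 ^ r * ((a+1)*(b+1) * (V.card+1)^r) := by rw [← pow_add, hab]
        _ ≤ 2 ^ r * ((r+1)*(r+1) * (V.card+1)^r) := by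
            apply Nat.mul_le_mul_left
            apply Nat.mul_le_mul_right
            exact Nat.mul_le_mul haa hbb
    exact hcard.trans hprod
  calc ∑ Q ∈ Ys.powerset, (G.filter fun C => (C \ B₀) ∩ Ys = Q).card
      ≤ ∑ _Q ∈ Ys.powerset, 2 ^ r * ((r + 1) * (r + 1) * (V.card + 1) ^ r) :=
        Finset.sum_le_sum hperfiber
    _ = 2 ^ ρ * (2 ^ r * ((r + 1) * (r + 1) * (V.card + 1) ^ r)) := by
        rw [Finset.sum_const, card_powerset, hYscard, smul_eq_mul]
    _ ≤ 2 ^ r * (2 ^ r * ((r + 1) * (r + 1) * (V.card + 1) ^ r)) := by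
        apply Nat.mul_le_mul_right
        exact Nat.pow_le_pow_right (by norm_num) hρr
    _ = 4 ^ r * (r + 1) ^ 2 * (V.card + 1) ^ r := by
        rw [show (4:ℕ) = 2*2 by norm_num, mul_pow]
        ring

lemma large_k_aux {r k : ℕ} (hr : 1 ≤ r) (hk : 2 * r + 1 ≤ k) :
    ∀ n (F : Finset (Finset α)), F.card ≤ n → (∀ A ∈ F, A.card = k) →
    (∀ A ∈ F, ∀ B ∈ F, A ≠ B → (A ∩ B).Nonempty → (A \ B).card ≤ r) →
    F.card ≤ 4 ^ r * (r + 1) ^ 2 * 2 ^ r * (F.sup id).card ^ r := by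
  intro n
  induction n with
  | zero =>
    intro F hFn _ _
    simp only [Nat.le_zero, card_eq_zero] at hFn
    subst hFn; simp
  | succ n ih =>
    intro F hFn hU hP
    rcases F.eq_empty_or_nonempty with rfl | ⟨A₀, hA₀⟩
    · simp
    set T := F.filter (fun B => (B ∩ A₀).Nonempty) with hTdef
    set F' := F \ T with hF'def
    have hTsub : T ⊆ F := filter_subset _ _
    have hA₀T : A₀ ∈ T := by
      rw [hTdef, mem_filter]
      refine ⟨hA₀, ?_⟩
      rw [inter_self]
      rw [← card_pos, hU A₀ hA₀]; omega
    have hsplit : F.card = T.card + F'.card := by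
      rw [hF'def, card_sdiff_of_subset hTsub]
      have := card_le_card hTsub
      omega
    have hbig : ∀ B ∈ T, k - r ≤ (B ∩ A₀).card := by
      intro B hB
      rw [hTdef, mem_filter] at hB
      obtain ⟨hBF, hBne⟩ := hB
      by_cases hBA : B = A₀
      · subst hBA; rw [inter_self, hU B hBF]; omega
      · have h1 := hP B hBF A₀ hA₀ hBA hBne
        have h2 := card_sdiff_add_card_inter B A₀
        rw [hU B hBF] at h2
        omega
    -- any two members of T intersect in A₀, hence are close
    have hTpair : ∀ B ∈ T, ∀ C ∈ T, (B \ C).card ≤ r := by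
      intro B hB C hC
      by_cases hBC : B = C
      · subst hBC; simp
      have h1 := hbig B hB
      have h2 := hbig C hC
      have hinter : ((B ∩ A₀) ∩ (C ∩ A₀)).card + ((B ∩ A₀) ∪ (C ∩ A₀)).card
          = (B ∩ A₀).card + (C ∩ A₀).card := card_inter_add_card_union _ _
      have hsubA : (B ∩ A₀) ∪ (C ∩ A₀) ⊆ A₀ := by
        apply union_subset inter_subset_right inter_subset_right
      have hcardA : ((B ∩ A₀) ∪ (C ∩ A₀)).card ≤ k := by
        rw [← hU A₀ (hTsub hA₀T)]
        exact card_le_card hsubA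
      have hsubBC : (B ∩ A₀) ∩ (C ∩ A₀) ⊆ B ∩ C := by
        intro x hx
        simp only [mem_inter] at hx ⊢
        exact ⟨hx.1.1, hx.2.1⟩
      have hpos : 0 < (B ∩ C).card := by
        have := card_le_card hsubBC
        omega
      exact hP B (hTsub hB) C (hTsub hC) hBC (card_pos.mp hpos)
    -- separation of F' from T
    have hsep : ∀ B ∈ F', ∀ C ∈ T, B ∩ C = ∅ := by
      intro B hB C hC
      rw [hF'def, mem_sdiff] at hB
      obtain ⟨hBF, hBnT⟩ := hB
      have hBA₀ : B ∩ A₀ = ∅ := by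
        by_contra hne
        exact hBnT (by rw [hTdef, mem_filter]; exact ⟨hBF, nonempty_iff_ne_empty.mpr hne⟩)
      by_contra hne
      have hBCne : (B ∩ C).Nonempty := nonempty_iff_ne_empty.mpr hne
      have hBneC : B ≠ C := by
        intro h; subst h; exact hBnT hC
      have h1 := hP B hBF C (hTsub hC) hBneC hBCne
      have h2 : k - r ≤ (B ∩ C).card := by
        have h3 := card_sdiff_add_card_inter B C
        rw [hU B hBF] at h3
        omega
      have h4 := hbig C hC
      -- B∩C and A₀∩C inside C must intersect
      have hin : (B ∩ C) ∩ (A₀ ∩ C) ⊆ B ∩ A₀ := by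
        intro x hx
        simp only [mem_inter] at hx ⊢
        exact ⟨hx.1.1, hx.2.1⟩
      have hc : ((B ∩ C) ∩ (A₀ ∩ C)).card + ((B ∩ C) ∪ (A₀ ∩ C)).card
          = (B ∩ C).card + (A₀ ∩ C).card := card_inter_add_card_union _ _
      have hsubC : (B ∩ C) ∪ (A₀ ∩ C) ⊆ C := union_subset inter_subset_right inter_subset_right
      have hcC : ((B ∩ C) ∪ (A₀ ∩ C)).card ≤ k := by
        rw [← hU C (hTsub hC)]; exact card_le_card hsubC
      have h5 : (A₀ ∩ C).card = (C ∩ A₀).card := by rw [inter_comm]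
      have h6 : 0 < ((B ∩ C) ∩ (A₀ ∩ C)).card := by omega
      have h7 := card_le_card hin
      rw [hBA₀, card_empty] at h7
      omega
    -- cluster bound for T
    set VT := T.sup id with hVTdef
    have hVT : ∀ A ∈ T, A ⊆ VT := fun A hA => Finset.le_sup (f := id) hA
    have hVTpos : 1 ≤ VT.card := by
      have h1 : A₀ ⊆ VT := hVT A₀ hA₀T
      have h2 : 1 ≤ A₀.card := by rw [hU A₀ hA₀]; omega
      have := card_le_card h1
      omega
    have hTbound : T.card ≤ 4 ^ r * (r + 1) ^ 2 * 2 ^ r * VT.card ^ r := by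
      have h1 := cluster_bound (r := r) (k := k) T VT (fun A hA => hU A (hTsub hA)) hVT hTpair
      have h2 : (VT.card + 1) ^ r ≤ 2 ^ r * VT.card ^ r := by
        rw [← mul_pow]
        apply Nat.pow_le_pow_left
        omega
      calc T.card ≤ 4 ^ r * (r + 1) ^ 2 * (VT.card + 1) ^ r := h1
        _ ≤ 4 ^ r * (r + 1) ^ 2 * (2 ^ r * VT.card ^ r) := Nat.mul_le_mul_left _ h2
        _ = 4 ^ r * (r + 1) ^ 2 * 2 ^ r * VT.card ^ r := by ring
    -- induction for F'
    have hF'card : F'.card ≤ n := by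
      have h1 : 1 ≤ T.card := card_pos.mpr ⟨A₀, hA₀T⟩
      omega
    have hF'sub : F' ⊆ F := sdiff_subset
    have hF'bound := ih F' hF'card (fun A hA => hU A (hF'sub hA))
      (fun A hA B hB => hP A (hF'sub hA) B (hF'sub hB))
    set VF' := F'.sup id with hVF'def
    -- supports are disjoint
    have hdisj : Disjoint VT VF' := by
      rw [Finset.disjoint_left]
      intro x hxT hxF'
      rw [hVTdef, Finset.mem_sup] at hxT
      rw [hVF'def, Finset.mem_sup] at hxF'
      obtain ⟨C, hC, hxC⟩ := hxT
      obtain ⟨B, hB, hxB⟩ := hxF'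
      have := hsep B hB C hC
      have : x ∈ B ∩ C := mem_inter.mpr ⟨hxB, hxC⟩
      rw [hsep B hB C hC] at this
      exact notMem_empty x this
    have hsub : VT ∪ VF' ⊆ F.sup id := by
      apply union_subset
      · exact (Finset.sup_mono hTsub : T.sup id ≤ F.sup id)
      · exact (Finset.sup_mono hF'sub : F'.sup id ≤ F.sup id)
    have hcards : VT.card + VF'.card ≤ (F.sup id).card := by
      rw [← card_union_of_disjoint hdisj]
      exact card_le_card hsub
    calc F.card = T.card + F'.card := hsplit
      _ ≤ 4 ^ r * (r + 1) ^ 2 * 2 ^ r * VT.card ^ r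
          + 4 ^ r * (r + 1) ^ 2 * 2 ^ r * VF'.card ^ r := Nat.add_le_add hTbound hF'bound
      _ = 4 ^ r * (r + 1) ^ 2 * 2 ^ r * (VT.card ^ r + VF'.card ^ r) := by ring
      _ ≤ 4 ^ r * (r + 1) ^ 2 * 2 ^ r * (VT.card + VF'.card) ^ r :=
          Nat.mul_le_mul_left _ (pow_superadd hr _ _)
      _ ≤ 4 ^ r * (r + 1) ^ 2 * 2 ^ r * (F.sup id).card ^ r :=
          Nat.mul_le_mul_left _ (Nat.pow_le_pow_left hcards _)

lemma large_k {r k : ℕ} (hr : 1 ≤ r) (hk : 2 * r + 1 ≤ k)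
    (F : Finset (Finset α)) (hU : ∀ A ∈ F, A.card = k)
    (hP : ∀ A ∈ F, ∀ B ∈ F, A ≠ B → (A ∩ B).Nonempty → (A \ B).card ≤ r)
    (V : Finset α) (hV : ∀ A ∈ F, A ⊆ V) :
    F.card ≤ 4 ^ r * (r + 1) ^ 2 * 2 ^ r * V.card ^ r := by
  have h1 := large_k_aux hr hk F.card F le_rfl hU hP
  have h2 : F.sup id ⊆ V := (Finset.sup_le (fun A hA => hV A hA) : F.sup id ≤ V)
  calc F.card ≤ 4 ^ r * (r + 1) ^ 2 * 2 ^ r * (F.sup id).card ^ r := h1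
    _ ≤ 4 ^ r * (r + 1) ^ 2 * 2 ^ r * V.card ^ r :=
        Nat.mul_le_mul_left _ (Nat.pow_le_pow_left (card_le_card h2) _)


lemma small_k {r k t : ℕ} (hr : 2 ≤ r) (ht2 : 2 ≤ t) (htr : t ≤ r) (hkt : k = r + t)
    (F : Finset (Finset α)) (V : Finset α) (hV : ∀ A ∈ F, A ⊆ V)
    (hU : ∀ A ∈ F, A.card = k)
    (hP : ∀ A ∈ F, ∀ B ∈ F, A ≠ B → (A ∩ B).Nonempty → (A \ B).card ≤ r) :
    F.card ≤ (4 ^ r * ((2 * r + 1) * r + 1) + (r + 1)) * (V.card + 1) ^ r := by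
  set v := V.card with hvdef
  set μ := r * (v + 1) ^ (r - 1) with hμdef
  set Λ := 2 * r * μ + μ + 1 with hΛdef
  set N : Finset α → ℕ := fun S => (F.filter (fun C => S ⊆ C)).card with hNdef
  -- supersets of a (t+1)-or-larger set are few
  have hNbig : ∀ S : Finset α, t + 1 ≤ S.card → N S ≤ μ := by
    intro S hS
    have hinj : (F.filter (fun C => S ⊆ C)).card ≤ (smallSets V (r - 1)).card := by
      apply Finset.card_le_card_of_injOn (fun C => C \ S)
      · intro C hC
        rw [mem_coe, mem_filter] at hC
        simp only [mem_coe, mem_smallSets]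
        constructor
        · exact fun x hx => hV C hC.1 (mem_sdiff.mp hx).1
        · have h1 : (C \ S).card = C.card - S.card := card_sdiff_of_subset hC.2
          have h2 := hU C hC.1
          omega
      · intro C hC C' hC' heq
        rw [mem_coe, mem_filter] at hC hC'
        have e1 : C = S ∪ (C \ S) := by
          ext x; simp only [mem_union, mem_sdiff]
          constructor
          · intro h; by_cases hx : x ∈ S; exacts [Or.inl hx, Or.inr ⟨h, hx⟩]
          · rintro (h | h); exacts [hC.2 h, h.1]
        have e2 : C' = S ∪ (C' \ S) := by
          ext x; simp only [mem_union, mem_sdiff]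
          constructor
          · intro h; by_cases hx : x ∈ S; exacts [Or.inl hx, Or.inr ⟨h, hx⟩]
          · rintro (h | h); exacts [hC'.2 h, h.1]
        have heq' : C \ S = C' \ S := heq
        rw [e1, e2, heq']
    calc N S ≤ (smallSets V (r - 1)).card := hinj
      _ ≤ (r - 1 + 1) * (v + 1) ^ (r - 1) := card_smallSets V (r - 1)
      _ ≤ μ := by rw [hμdef]; apply Nat.mul_le_mul_right; omega
  set Heavy : Finset α → Prop := fun S => S.card = t ∧ Λ ≤ N S with hHdef
  -- a heavy core intersecting a member is contained in it
  have habsorb : ∀ A ∈ F, ∀ S : Finset α, Heavy S → (A ∩ S).Nonempty → S ⊆ A := by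
    intro A hA S hHS hAS
    by_contra hnSA
    set Bad := F.filter (fun C => S ⊆ C ∧ (C ∩ (A \ S)).Nonempty) with hBaddef
    have hBadcard : Bad.card ≤ 2 * r * μ := by
      have hsub : Bad ⊆ (A \ S).biUnion (fun y => F.filter (fun C => insert y S ⊆ C)) := by
        intro C hC
        rw [hBaddef, mem_filter] at hC
        obtain ⟨hCF, hSC, ⟨y, hy⟩⟩ := hC
        rw [mem_inter] at hy
        rw [mem_biUnion]
        exact ⟨y, hy.2, mem_filter.mpr ⟨hCF, insert_subset hy.1 hSC⟩⟩
      calc Bad.card ≤ ((A \ S).biUnion (fun y => F.filter (fun C => insert y S ⊆ C))).card :=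
            card_le_card hsub
        _ ≤ ∑ y ∈ A \ S, (F.filter (fun C => insert y S ⊆ C)).card := card_biUnion_le
        _ ≤ ∑ _y ∈ A \ S, μ := by
            apply Finset.sum_le_sum
            intro y hy
            apply hNbig
            rw [card_insert_of_notMem (fun h => (mem_sdiff.mp hy).2 h), hHS.1]
        _ = (A \ S).card * μ := by rw [Finset.sum_const, smul_eq_mul]
        _ ≤ 2 * r * μ := by
            apply Nat.mul_le_mul_right
            calc (A \ S).card ≤ A.card := card_le_card sdiff_subset
              _ = k := hU A hA
              _ ≤ 2 * r := by omega
    have hex : ∃ C ∈ F.filter (fun C => S ⊆ C), C ∉ Bad := by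
      by_contra hcon
      push_neg at hcon
      have : F.filter (fun C => S ⊆ C) ⊆ Bad := fun C hC => hcon C hC
      have h1 := card_le_card this
      have h2 : Λ ≤ (F.filter (fun C => S ⊆ C)).card := hHS.2
      rw [hΛdef] at h2
      omega
    obtain ⟨C, hCmem, hCnBad⟩ := hex
    rw [mem_filter] at hCmem
    obtain ⟨hCF, hSC⟩ := hCmem
    have hCA : C ∩ (A \ S) = ∅ := by
      by_contra hne
      exact hCnBad (by
        rw [hBaddef, mem_filter]
        exact ⟨hCF, hSC, nonempty_iff_ne_empty.mpr hne⟩)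
    have hACS : A ∩ C = A ∩ S := by
      ext x
      simp only [mem_inter]
      constructor
      · rintro ⟨hxA, hxC⟩
        refine ⟨hxA, ?_⟩
        by_contra hxS
        have : x ∈ C ∩ (A \ S) := by
          rw [mem_inter, mem_sdiff]; exact ⟨hxC, hxA, hxS⟩
        rw [hCA] at this
        exact notMem_empty x this
      · rintro ⟨hxA, hxS⟩
        exact ⟨hxA, hSC hxS⟩
    have hAneC : A ≠ C := by
      intro h
      exact hnSA (h ▸ hSC)
    have hACne : (A ∩ C).Nonempty := by rw [hACS]; exact hAS
    have h1 := hP A hA C hCF hAneC hACne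
    have h2 := card_sdiff_add_card_inter A C
    rw [hU A hA] at h2
    have h3 : t ≤ (A ∩ S).card := by rw [← hACS]; omega
    have h4 : A ∩ S = S := by
      apply Finset.eq_of_subset_of_card_le inter_subset_right
      rw [hHS.1]; exact h3
    exact hnSA (h4 ▸ inter_subset_left)
  -- heavy cores are pairwise disjoint
  have hdisjcores : ∀ S S' : Finset α, Heavy S → Heavy S' → S ≠ S' → S ∩ S' = ∅ := by
    intro S S' hS hS' hne
    by_contra hint
    obtain ⟨x, hx⟩ := nonempty_iff_ne_empty.mpr hint
    rw [mem_inter] at hx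
    have hsub : F.filter (fun C => S' ⊆ C) ⊆ F.filter (fun C => S ∪ S' ⊆ C) := by
      intro C hC
      rw [mem_filter] at hC ⊢
      refine ⟨hC.1, union_subset ?_ hC.2⟩
      apply habsorb C hC.1 S hS
      exact ⟨x, mem_inter.mpr ⟨hC.2 hx.2, hx.1⟩⟩
    have h1 : Λ ≤ N (S ∪ S') := le_trans hS'.2 (card_le_card hsub)
    have h2 : t + 1 ≤ (S ∪ S').card := by
      rcases Nat.lt_or_ge (S ∪ S').card (t + 1) with h | h
      · exfalso
        have hSsub : S ⊆ S ∪ S' := subset_union_left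
        have hcards : (S ∪ S').card ≤ S.card := by rw [hS.1]; omega
        have heqU : S = S ∪ S' := Finset.eq_of_subset_of_card_le hSsub hcards
        have hS'S : S' ⊆ S := by rw [heqU]; exact subset_union_right
        have : S' = S := Finset.eq_of_subset_of_card_le hS'S (by rw [hS.1, hS'.1])
        exact hne this.symm
      · exact h
    have h3 := hNbig (S ∪ S') h2
    omega
  -- the finset of heavy cores
  set cores : Finset (Finset α) :=
    (smallSets V t).filter (fun S => S.card = t ∧ Λ ≤ N S) with hcoresdef
  have hmem_cores : ∀ S : Finset α, S ∈ cores ↔ Heavy S := by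
    intro S
    rw [hcoresdef, mem_filter, mem_smallSets]
    constructor
    · rintro ⟨_, h⟩; exact h
    · intro h
      refine ⟨⟨?_, ?_⟩, h⟩
      · have h1 : 1 ≤ N S := le_trans (by rw [hΛdef]; omega) h.2
        rw [hNdef] at h1
        obtain ⟨C, hC⟩ := card_pos.mp h1
        rw [mem_filter] at hC
        exact fun x hx => hV C hC.1 (hC.2 hx)
      · rw [h.1]
  -- low-degree elements
  set D := 4 ^ r * Λ with hDdef
  have hlow : ∀ x : α, (¬ ∃ S ∈ cores, x ∈ S) →
      (F.filter (fun C => x ∈ C)).card ≤ D := by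
    intro x hx
    rcases (F.filter (fun C => x ∈ C)).eq_empty_or_nonempty with he | ⟨B₀, hB₀⟩
    · rw [he]; simp
    rw [mem_filter] at hB₀
    obtain ⟨hB₀F, hxB₀⟩ := hB₀
    have hfib : (F.filter (fun C => x ∈ C)).card =
        ∑ S ∈ B₀.powerset, ((F.filter (fun C => x ∈ C)).filter (fun C => C ∩ B₀ = S)).card := by
      apply Finset.card_eq_sum_card_fiberwise
      intro C _
      rw [mem_coe, mem_powerset]
      exact inter_subset_right
    have hperfib : ∀ S ∈ B₀.powerset,
        ((F.filter (fun C => x ∈ C)).filter (fun C => C ∩ B₀ = S)).card ≤ Λ := by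
      intro S hS
      rcases ((F.filter (fun C => x ∈ C)).filter (fun C => C ∩ B₀ = S)).eq_empty_or_nonempty
        with he | ⟨C₀, hC₀⟩
      · rw [he]; simp
      rw [mem_filter, mem_filter] at hC₀
      obtain ⟨⟨hC₀F, hxC₀⟩, hC₀S⟩ := hC₀
      have hxS : x ∈ S := by rw [← hC₀S, mem_inter]; exact ⟨hxC₀, hxB₀⟩
      have htle : t ≤ S.card := by
        by_cases hCB : C₀ = B₀
        · rw [← hC₀S, hCB, inter_self, hU B₀ hB₀F]; omega
        · have h1 := hP C₀ hC₀F B₀ hB₀F hCB ⟨x, mem_inter.mpr ⟨hxC₀, hxB₀⟩⟩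
          have h2 := card_sdiff_add_card_inter C₀ B₀
          rw [hU C₀ hC₀F] at h2
          rw [← hC₀S]
          omega
      have hsubN : (F.filter (fun C => x ∈ C)).filter (fun C => C ∩ B₀ = S) ⊆
          F.filter (fun C => S ⊆ C) := by
        intro C hC
        rw [mem_filter, mem_filter] at hC
        rw [mem_filter]
        refine ⟨hC.1.1, ?_⟩
        rw [← hC.2]
        exact inter_subset_left
      have hle : ((F.filter (fun C => x ∈ C)).filter (fun C => C ∩ B₀ = S)).card ≤ N S :=
        card_le_card hsubN
      rcases Nat.lt_or_ge S.card (t + 1) with hcase | hcase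
      · -- S.card = t
        have hSt : S.card = t := by omega
        have hnotheavy : ¬ Λ ≤ N S := by
          intro hcon
          exact hx ⟨S, (hmem_cores S).mpr ⟨hSt, hcon⟩, hxS⟩
        omega
      · have := hNbig S hcase
        rw [hΛdef]
        omega
    calc (F.filter (fun C => x ∈ C)).card
        = ∑ S ∈ B₀.powerset, ((F.filter (fun C => x ∈ C)).filter (fun C => C ∩ B₀ = S)).card :=
          hfib
      _ ≤ ∑ _S ∈ B₀.powerset, Λ := Finset.sum_le_sum hperfib
      _ = 2 ^ B₀.card * Λ := by rw [Finset.sum_const, card_powerset, smul_eq_mul]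
      _ ≤ 4 ^ r * Λ := by
          apply Nat.mul_le_mul_right
          calc 2 ^ B₀.card = 2 ^ k := by rw [hU B₀ hB₀F]
            _ ≤ 2 ^ (2 * r) := Nat.pow_le_pow_right (by norm_num) (by omega)
            _ = 4 ^ r := by rw [pow_mul]; norm_num
  -- the part of F all of whose elements are covered by heavy cores
  set Fstar := F.filter (fun A => ∀ x ∈ A, ∃ S ∈ cores, x ∈ S) with hFstardef
  have hFminus : (F \ Fstar).card ≤ v * D := by
    have hsub : F \ Fstar ⊆
        (V.filter (fun x => ¬ ∃ S ∈ cores, x ∈ S)).biUnion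
          (fun x => F.filter (fun C => x ∈ C)) := by
      intro A hA
      rw [mem_sdiff, hFstardef, mem_filter] at hA
      obtain ⟨hAF, hAn⟩ := hA
      have : ∃ x ∈ A, ¬ ∃ S ∈ cores, x ∈ S := by
        by_contra hcon
        push_neg at hcon
        exact hAn ⟨hAF, hcon⟩
      obtain ⟨x, hxA, hxn⟩ := this
      rw [mem_biUnion]
      exact ⟨x, mem_filter.mpr ⟨hV A hAF hxA, hxn⟩, mem_filter.mpr ⟨hAF, hxA⟩⟩
    calc (F \ Fstar).card ≤ _ := card_le_card hsub
      _ ≤ ∑ x ∈ V.filter (fun x => ¬ ∃ S ∈ cores, x ∈ S),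
            (F.filter (fun C => x ∈ C)).card := card_biUnion_le
      _ ≤ ∑ x ∈ V.filter (fun x => ¬ ∃ S ∈ cores, x ∈ S), D := by
          apply Finset.sum_le_sum
          intro x hxmem
          exact hlow x (mem_filter.mp hxmem).2
      _ = (V.filter (fun x => ¬ ∃ S ∈ cores, x ∈ S)).card * D := by
          rw [Finset.sum_const, smul_eq_mul]
      _ ≤ v * D := Nat.mul_le_mul_right _ (by rw [hvdef]; exact card_le_card (filter_subset _ _))
  -- bound on Fstar via cores
  have hcorescard : cores.card ≤ v := by
    have hdisjoint : ∀ S ∈ cores, ∀ S' ∈ cores, S ≠ S' → Disjoint S S' := by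
      intro S hS S' hS' hne
      rw [Finset.disjoint_left]
      intro a haS haS'
      have := hdisjcores S S' ((hmem_cores S).mp hS) ((hmem_cores S').mp hS') hne
      have : a ∈ S ∩ S' := mem_inter.mpr ⟨haS, haS'⟩
      rw [hdisjcores S S' ((hmem_cores S).mp hS) ((hmem_cores S').mp hS') hne] at this
      exact notMem_empty a this
    have hbi : (cores.biUnion id).card = ∑ S ∈ cores, S.card :=
      card_biUnion hdisjoint
    have hsum : ∑ S ∈ cores, S.card = cores.card * t := by
      rw [Finset.sum_congr rfl (fun S hS => ((hmem_cores S).mp hS).1)]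
      rw [Finset.sum_const, smul_eq_mul]
    have hsubV : cores.biUnion id ⊆ V := by
      intro x hx
      rw [mem_biUnion] at hx
      obtain ⟨S, hS, hxS⟩ := hx
      have : S ∈ smallSets V t := (mem_filter.mp hS).1
      exact (mem_smallSets.mp this).1 hxS
    have h1 : cores.card * t ≤ v := by
      rw [← hsum, ← hbi, hvdef]
      exact card_le_card hsubV
    have h2 : cores.card ≤ cores.card * t := Nat.le_mul_of_pos_right _ (by omega)
    omega
  have hktr : k / t ≤ r := by
    have h1 : k / t = r / t + 1 := by
      rw [hkt, Nat.add_div_right _ (by omega : 0 < t)]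
    have h2 : r / t ≤ r / 2 := Nat.div_le_div_left ht2 (by omega)
    omega
  have hFstar : Fstar.card ≤ (r + 1) * (v + 1) ^ r := by
    have hrecov : ∀ A ∈ Fstar, (cores.filter (· ⊆ A)).sup id = A := by
      intro A hA
      rw [hFstardef, mem_filter] at hA
      obtain ⟨hAF, hAcov⟩ := hA
      apply Finset.Subset.antisymm
      · intro x hx
        rw [Finset.mem_sup] at hx
        obtain ⟨S, hS, hxS⟩ := hx
        exact (mem_filter.mp hS).2 hxS
      · intro x hxA
        obtain ⟨S, hScores, hxS⟩ := hAcov x hxA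
        have hSA : S ⊆ A := by
          apply habsorb A hAF S ((hmem_cores S).mp hScores)
          exact ⟨x, mem_inter.mpr ⟨hxA, hxS⟩⟩
        rw [Finset.mem_sup]
        exact ⟨S, mem_filter.mpr ⟨hScores, hSA⟩, hxS⟩
    have hinj : Fstar.card ≤ (smallSets cores (k / t)).card := by
      apply Finset.card_le_card_of_injOn (fun A => cores.filter (· ⊆ A))
      · intro A hA
        simp only [mem_coe, mem_smallSets]
        refine ⟨filter_subset _ _, ?_⟩
        have hAF : A ∈ F := (mem_filter.mp hA).1
        set CA := cores.filter (· ⊆ A) with hCAdef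
        have hdisjoint : ∀ S ∈ CA, ∀ S' ∈ CA, S ≠ S' → Disjoint S S' := by
          intro S hS S' hS' hne
          rw [Finset.disjoint_left]
          intro a haS haS'
          have heq := hdisjcores S S'
            ((hmem_cores S).mp (mem_filter.mp hS).1)
            ((hmem_cores S').mp (mem_filter.mp hS').1) hne
          have : a ∈ S ∩ S' := mem_inter.mpr ⟨haS, haS'⟩
          rw [heq] at this
          exact notMem_empty a this
        have hbi : (CA.biUnion id).card = ∑ S ∈ CA, S.card := card_biUnion hdisjoint
        have hsum : ∑ S ∈ CA, S.card = CA.card * t := by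
          rw [Finset.sum_congr rfl
            (fun S hS => ((hmem_cores S).mp (mem_filter.mp hS).1).1)]
          rw [Finset.sum_const, smul_eq_mul]
        have hsubA : CA.biUnion id ⊆ A := by
          intro x hx
          rw [mem_biUnion] at hx
          obtain ⟨S, hS, hxS⟩ := hx
          exact (mem_filter.mp hS).2 hxS
        have h1 : CA.card * t ≤ k := by
          rw [← hsum, ← hbi, ← hU A hAF]
          exact card_le_card hsubA
        exact (Nat.le_div_iff_mul_le (by omega : 0 < t)).mpr h1
      · intro A hA A' hA' heq
        rw [mem_coe] at hA hA'
        have heq' : cores.filter (· ⊆ A) = cores.filter (· ⊆ A') := heq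
        rw [← hrecov A hA, ← hrecov A' hA', heq']
    calc Fstar.card ≤ (smallSets cores (k / t)).card := hinj
      _ ≤ (k / t + 1) * (cores.card + 1) ^ (k / t) := card_smallSets _ _
      _ ≤ (r + 1) * (v + 1) ^ r := by
          apply Nat.mul_le_mul (by omega)
          calc (cores.card + 1) ^ (k / t) ≤ (v + 1) ^ (k / t) :=
                Nat.pow_le_pow_left (by omega) _
            _ ≤ (v + 1) ^ r := Nat.pow_le_pow_right (by omega) hktr
  -- assemble
  have hsplit : F.card = (F \ Fstar).card + Fstar.card := by
    have hsub : Fstar ⊆ F := filter_subset _ _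
    rw [card_sdiff_of_subset hsub]
    have := card_le_card hsub
    omega
  have hvD : v * D ≤ (4 ^ r * ((2 * r + 1) * r + 1)) * (v + 1) ^ r := by
    have h1 : v * (v + 1) ^ (r - 1) ≤ (v + 1) ^ r := by
      calc v * (v + 1) ^ (r - 1) ≤ (v + 1) * (v + 1) ^ (r - 1) :=
            Nat.mul_le_mul_right _ (by omega)
        _ = (v + 1) ^ (r - 1 + 1) := by rw [pow_succ, mul_comm]
        _ = (v + 1) ^ r := by congr 1; omega
    have h2 : v ≤ (v + 1) ^ r := by
      calc v ≤ v + 1 := by omega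
        _ = (v + 1) ^ 1 := (pow_one _).symm
        _ ≤ (v + 1) ^ r := Nat.pow_le_pow_right (by omega) (by omega)
    calc v * D = v * (4 ^ r * (2 * r * μ + μ + 1)) := by rw [hDdef, hΛdef]
      _ = 4 ^ r * ((2 * r + 1) * (r * (v * (v + 1) ^ (r - 1)))) + 4 ^ r * v := by
          rw [hμdef]; ring
      _ ≤ 4 ^ r * ((2 * r + 1) * (r * (v + 1) ^ r)) + 4 ^ r * (v + 1) ^ r := by
          apply Nat.add_le_add
          · apply Nat.mul_le_mul_left
            apply Nat.mul_le_mul_left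
            exact Nat.mul_le_mul_left _ h1
          · exact Nat.mul_le_mul_left _ h2
      _ = (4 ^ r * ((2 * r + 1) * r + 1)) * (v + 1) ^ r := by ring
  calc F.card = (F \ Fstar).card + Fstar.card := hsplit
    _ ≤ v * D + (r + 1) * (v + 1) ^ r := Nat.add_le_add hFminus hFstar
    _ ≤ (4 ^ r * ((2 * r + 1) * r + 1)) * (v + 1) ^ r + (r + 1) * (v + 1) ^ r :=
        Nat.add_le_add_right hvD _
    _ = (4 ^ r * ((2 * r + 1) * r + 1) + (r + 1)) * (v + 1) ^ r := by ring

end SetFamilies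

/-- the final constant -/
def Cbig (r : ℕ) : ℕ :=
  (4 ^ r * ((2 * r + 1) * r + 1) + (r + 1)) * 2 ^ r + 4 ^ r * (r + 1) ^ 2 * 2 ^ r + 1

/-- the property derived from avoiding `F_{1,r+1,r+1,1}` -/
def PropP (m r : ℕ) (F : Finset (Finset (Fin m))) : Prop :=
  ∀ A ∈ F, ∀ B ∈ F, A ≠ B → (A ∩ B).Nonempty → A ∪ B ≠ Finset.univ → (A \ B).card ≤ r

lemma binom_bound {m k : ℕ} (F : Finset (Finset (Fin m))) (hU : ∀ A ∈ F, A.card = k) :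
    F.card ≤ m.choose k := by
  have hsub : F ⊆ Finset.univ.powersetCard k := by
    intro A hA
    rw [mem_powersetCard]
    exact ⟨subset_univ A, hU A hA⟩
  have := card_le_card hsub
  rwa [card_powersetCard, card_univ, Fintype.card_fin] at this

lemma compl_family {m k r : ℕ} (F : Finset (Finset (Fin m)))
    (hU : ∀ A ∈ F, A.card = k) (hP : PropP m r F) :
    ∃ F' : Finset (Finset (Fin m)), F'.card = F.card ∧ (∀ A ∈ F', A.card = m - k) ∧
      PropP m r F' := by
  have hcomplinj : ∀ A B : Finset (Fin m), Finset.univ \ A = Finset.univ \ B → A = B := by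
    intro A B h
    have h1 : Finset.univ \ (Finset.univ \ A) = A := by
      rw [Finset.sdiff_sdiff_self_left, Finset.univ_inter]
    have h2 : Finset.univ \ (Finset.univ \ B) = B := by
      rw [Finset.sdiff_sdiff_self_left, Finset.univ_inter]
    rw [← h1, ← h2, h]
  refine ⟨F.image (fun A => Finset.univ \ A), ?_, ?_, ?_⟩
  · apply Finset.card_image_of_injOn
    intro A _ B _ h
    exact hcomplinj A B h
  · intro A' hA'
    rw [mem_image] at hA'
    obtain ⟨A, hA, rfl⟩ := hA'
    rw [card_sdiff_of_subset (subset_univ A), card_univ, Fintype.card_fin, hU A hA]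
  · intro A' hA' B' hB' hne hint huni
    rw [mem_image] at hA' hB'
    obtain ⟨A, hA, rfl⟩ := hA'
    obtain ⟨B, hB, rfl⟩ := hB'
    have hABne : A ≠ B := fun h => hne (by rw [h])
    -- A' ∩ B' = univ \ (A ∪ B)
    have e1 : (Finset.univ \ A) ∩ (Finset.univ \ B) = Finset.univ \ (A ∪ B) := by
      ext x; simp only [mem_inter, mem_sdiff, mem_union, mem_univ, true_and]; tauto
    have e2 : (Finset.univ \ A) ∪ (Finset.univ \ B) = Finset.univ \ (A ∩ B) := by
      ext x; simp only [mem_union, mem_sdiff, mem_inter, mem_univ, true_and]; tauto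
    have e3 : (Finset.univ \ A) \ (Finset.univ \ B) = B \ A := by
      ext x; simp only [mem_sdiff, mem_univ, true_and]; tauto
    have hunine : A ∪ B ≠ Finset.univ := by
      intro h
      rw [e1, h, sdiff_self] at hint
      exact not_nonempty_empty hint
    have hintne : (A ∩ B).Nonempty := by
      rw [nonempty_iff_ne_empty]
      intro h
      rw [e2, h, sdiff_empty] at huni
      exact huni rfl
    have := hP A hA B hB hABne hintne hunine
    rw [e3, ← card_sdiff_eq_of_card_eq (by rw [hU A hA, hU B hB])]
    exact this

lemma family_half {m r k : ℕ} (hr : 1 ≤ r) (hm : 1 ≤ m) (h2k : 2 * k ≤ m)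
    (F : Finset (Finset (Fin m))) (hU : ∀ A ∈ F, A.card = k) (hP : PropP m r F) :
    (k ≤ r + 1 → F.card ≤ m ^ k) ∧ (r + 2 ≤ k → F.card ≤ (Cbig r - 1) * m ^ r) := by
  constructor
  · intro _
    calc F.card ≤ m.choose k := binom_bound F hU
      _ ≤ m ^ k := Nat.choose_le_pow _ _
  · intro hk2
    -- derive the intersection property
    have hP1 : ∀ A ∈ F, ∀ B ∈ F, A ≠ B → (A ∩ B).Nonempty → (A \ B).card ≤ r := by
      intro A hA B hB hne hint
      apply hP A hA B hB hne hint
      intro huniv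
      have h1 : (A ∪ B).card + (A ∩ B).card = A.card + B.card := by
        rw [add_comm]; exact card_inter_add_card_union A B
      have h2 : (A ∪ B).card = m := by rw [huniv, card_univ, Fintype.card_fin]
      have h3 : 1 ≤ (A ∩ B).card := card_pos.mpr hint
      rw [hU A hA, hU B hB] at h1
      omega
    have hmono : (m + 1) ^ r ≤ 2 ^ r * m ^ r := by
      rw [← mul_pow]
      exact Nat.pow_le_pow_left (by omega) r
    rcases Nat.lt_or_ge k (2 * r + 1) with hcase | hcase
    · -- small k : r + 2 ≤ k ≤ 2r, use heavy cores
      have hr2 : 2 ≤ r := by omega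
      have ht2 : 2 ≤ k - r := by omega
      have htr : k - r ≤ r := by omega
      have hkt : k = r + (k - r) := by omega
      have h := small_k hr2 ht2 htr hkt F Finset.univ (fun A _ => subset_univ A) hU hP1
      rw [card_univ, Fintype.card_fin] at h
      calc F.card ≤ (4 ^ r * ((2 * r + 1) * r + 1) + (r + 1)) * (m + 1) ^ r := h
        _ ≤ (4 ^ r * ((2 * r + 1) * r + 1) + (r + 1)) * (2 ^ r * m ^ r) :=
            Nat.mul_le_mul_left _ hmono
        _ = (4 ^ r * ((2 * r + 1) * r + 1) + (r + 1)) * 2 ^ r * m ^ r := by ring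
        _ ≤ (Cbig r - 1) * m ^ r := by
            apply Nat.mul_le_mul_right
            unfold Cbig
            omega
    · -- large k
      have h := large_k hr hcase F hU hP1 Finset.univ (fun A _ => subset_univ A)
      rw [card_univ, Fintype.card_fin] at h
      calc F.card ≤ 4 ^ r * (r + 1) ^ 2 * 2 ^ r * m ^ r := h
        _ ≤ (Cbig r - 1) * m ^ r := by
            apply Nat.mul_le_mul_right
            unfold Cbig
            omega

lemma family_full {m r k : ℕ} (hr : 1 ≤ r) (hm : 1 ≤ m) (hkm : k ≤ m)
    (F : Finset (Finset (Fin m))) (hU : ∀ A ∈ F, A.card = k) (hP : PropP m r F) :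
    ((k ≠ r + 1 ∧ k ≠ m - r - 1) → F.card ≤ Cbig r * m ^ r) ∧
      F.card ≤ Cbig r * m ^ (r + 1) := by
  have hCpos : 1 ≤ Cbig r := by unfold Cbig; omega
  have hmr : ∀ j, j ≤ r → m ^ j ≤ m ^ r := fun j hj => Nat.pow_le_pow_right hm hj
  rcases le_or_gt (2 * k) m with h2k | h2k
  · obtain ⟨hsmall, hbig⟩ := family_half hr hm h2k F hU hP
    constructor
    · rintro ⟨hne1, _⟩
      rcases Nat.lt_or_ge k (r + 2) with hc | hc
      · have hkr : k ≤ r := by omega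
        calc F.card ≤ m ^ k := hsmall (by omega)
          _ ≤ m ^ r := hmr k hkr
          _ ≤ Cbig r * m ^ r := Nat.le_mul_of_pos_left _ (by omega)
      · calc F.card ≤ (Cbig r - 1) * m ^ r := hbig hc
          _ ≤ Cbig r * m ^ r := Nat.mul_le_mul_right _ (by omega)
    · rcases Nat.lt_or_ge k (r + 2) with hc | hc
      · calc F.card ≤ m ^ k := hsmall (by omega)
          _ ≤ m ^ (r + 1) := Nat.pow_le_pow_right hm (by omega)
          _ ≤ Cbig r * m ^ (r + 1) := Nat.le_mul_of_pos_left _ (by omega)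
      · calc F.card ≤ (Cbig r - 1) * m ^ r := hbig hc
          _ ≤ Cbig r * m ^ (r + 1) :=
            Nat.mul_le_mul (by omega) (Nat.pow_le_pow_right hm (by omega))
  · -- complement side
    obtain ⟨F', hcard, hU', hP'⟩ := compl_family F hU hP
    have h2k' : 2 * (m - k) ≤ m := by omega
    obtain ⟨hsmall, hbig⟩ := family_half hr hm h2k' F' hU' hP'
    constructor
    · rintro ⟨_, hne2⟩
      rcases Nat.lt_or_ge (m - k) (r + 2) with hc | hc
      · have hkr : m - k ≤ r := by
          rcases Nat.lt_or_ge (m - k) (r + 1) with h | h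
          · omega
          · exfalso; apply hne2; omega
        calc F.card = F'.card := hcard.symm
          _ ≤ m ^ (m - k) := hsmall (by omega)
          _ ≤ m ^ r := hmr _ hkr
          _ ≤ Cbig r * m ^ r := Nat.le_mul_of_pos_left _ (by omega)
      · calc F.card = F'.card := hcard.symm
          _ ≤ (Cbig r - 1) * m ^ r := hbig hc
          _ ≤ Cbig r * m ^ r := Nat.mul_le_mul_right _ (by omega)
    · rcases Nat.lt_or_ge (m - k) (r + 2) with hc | hc
      · calc F.card = F'.card := hcard.symm
          _ ≤ m ^ (m - k) := hsmall (by omega)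
          _ ≤ m ^ (r + 1) := Nat.pow_le_pow_right hm (by omega)
          _ ≤ Cbig r * m ^ (r + 1) := Nat.le_mul_of_pos_left _ (by omega)
      · calc F.card = F'.card := hcard.symm
          _ ≤ (Cbig r - 1) * m ^ r := hbig hc
          _ ≤ Cbig r * m ^ (r + 1) :=
            Nat.mul_le_mul (by omega) (Nat.pow_le_pow_right hm (by omega))


def blockFun {m : ℕ} (r : ℕ) (x₀ w₀ : Fin m) (eP eQ : Fin (r + 1) → Fin m) :
    Fin (1 + (r + 1) + (r + 1) + 1) → Fin m := fun i =>
  if h1 : (i : ℕ) < 1 then x₀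
  else if h2 : (i : ℕ) < 1 + (r + 1) then eP ⟨(i : ℕ) - 1, by omega⟩
  else if h3 : (i : ℕ) < 1 + (r + 1) + (r + 1) then eQ ⟨(i : ℕ) - 1 - (r + 1), by omega⟩
  else w₀

variable {m r : ℕ} {x₀ w₀ : Fin m} {eP eQ : Fin (r + 1) → Fin m}

lemma blockFun_eq1 {i : Fin (1 + (r + 1) + (r + 1) + 1)} (h1 : (i : ℕ) < 1) : blockFun r x₀ w₀ eP eQ i = x₀ := by
  unfold blockFun; rw [dif_pos h1]

lemma blockFun_eq2 {i : Fin (1 + (r + 1) + (r + 1) + 1)} (h1 : ¬ (i : ℕ) < 1) (h2 : (i : ℕ) < 1 + (r + 1))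
    (hidx : (i : ℕ) - 1 < r + 1) :
    blockFun r x₀ w₀ eP eQ i = eP ⟨(i : ℕ) - 1, hidx⟩ := by
  unfold blockFun; rw [dif_neg h1, dif_pos h2]

lemma blockFun_eq3 {i : Fin (1 + (r + 1) + (r + 1) + 1)} (h2 : ¬ (i : ℕ) < 1 + (r + 1))
    (h3 : (i : ℕ) < 1 + (r + 1) + (r + 1)) (hidx : (i : ℕ) - 1 - (r + 1) < r + 1) :
    blockFun r x₀ w₀ eP eQ i = eQ ⟨(i : ℕ) - 1 - (r + 1), hidx⟩ := by
  unfold blockFun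
  rw [dif_neg (by omega : ¬ (i : ℕ) < 1), dif_neg h2, dif_pos h3]

lemma blockFun_eq4 {i : Fin (1 + (r + 1) + (r + 1) + 1)} (h3 : ¬ (i : ℕ) < 1 + (r + 1) + (r + 1)) :
    blockFun r x₀ w₀ eP eQ i = w₀ := by
  unfold blockFun
  rw [dif_neg (by omega : ¬ (i : ℕ) < 1), dif_neg (by omega : ¬ (i : ℕ) < 1 + (r + 1)),
    dif_neg h3]

lemma build_config {m n r : ℕ} (A : MatN m n) (j₁ j₂ : Fin n) (hj : j₁ ≠ j₂)
    (x₀ : Fin m) (hx1 : A x₀ j₁ = 1) (hx2 : A x₀ j₂ = 1)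
    (P Q : Finset (Fin m)) (hPcard : P.card = r + 1) (hQcard : Q.card = r + 1)
    (hPa : ∀ i ∈ P, A i j₁ = 1) (hPb : ∀ i ∈ P, A i j₂ = 0)
    (hQa : ∀ i ∈ Q, A i j₁ = 0) (hQb : ∀ i ∈ Q, A i j₂ = 1)
    (w₀ : Fin m) (hw1 : A w₀ j₁ = 0) (hw2 : A w₀ j₂ = 0) :
    IsConfig (Fabcd 1 (r + 1) (r + 1) 1) A := by
  set ePo := P.orderIsoOfFin hPcard with hePo
  set eQo := Q.orderIsoOfFin hQcard with heQo
  set eP : Fin (r + 1) → Fin m := fun a => (ePo a : Fin m) with hePdef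
  set eQ : Fin (r + 1) → Fin m := fun a => (eQo a : Fin m) with heQdef
  have hePinj : Function.Injective eP := by
    intro a b h
    exact ePo.injective (Subtype.coe_injective h)
  have heQinj : Function.Injective eQ := by
    intro a b h
    exact eQo.injective (Subtype.coe_injective h)
  have hePmem : ∀ a, eP a ∈ P := fun a => (ePo a).2
  have heQmem : ∀ a, eQ a ∈ Q := fun a => (eQo a).2
  set f := blockFun r x₀ w₀ eP eQ with hfdef
  -- value profile
  have hval1 : ∀ i : Fin (1 + (r + 1) + (r + 1) + 1), (i : ℕ) < 1 → A (f i) j₁ = 1 ∧ A (f i) j₂ = 1 := by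
    intro i h; rw [hfdef, blockFun_eq1 h]; exact ⟨hx1, hx2⟩
  have hval2 : ∀ (i : Fin (1 + (r + 1) + (r + 1) + 1)) (h1 : ¬ (i : ℕ) < 1) (h2 : (i : ℕ) < 1 + (r + 1)),
      A (f i) j₁ = 1 ∧ A (f i) j₂ = 0 := by
    intro i h1 h2
    rw [hfdef, blockFun_eq2 h1 h2 (by omega)]
    exact ⟨hPa _ (hePmem _), hPb _ (hePmem _)⟩
  have hval3 : ∀ (i : Fin (1 + (r + 1) + (r + 1) + 1)) (h2 : ¬ (i : ℕ) < 1 + (r + 1))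
      (h3 : (i : ℕ) < 1 + (r + 1) + (r + 1)),
      A (f i) j₁ = 0 ∧ A (f i) j₂ = 1 := by
    intro i h2 h3
    rw [hfdef, blockFun_eq3 h2 h3 (by omega)]
    exact ⟨hQa _ (heQmem _), hQb _ (heQmem _)⟩
  have hval4 : ∀ (i : Fin (1 + (r + 1) + (r + 1) + 1)) (h3 : ¬ (i : ℕ) < 1 + (r + 1) + (r + 1)),
      A (f i) j₁ = 0 ∧ A (f i) j₂ = 0 := by
    intro i h3
    rw [hfdef, blockFun_eq4 h3]
    exact ⟨hw1, hw2⟩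
  have hfinj : Function.Injective f := by
    intro i i' heq
    have key : ∀ b : Fin n, A (f i) b = A (f i') b := fun b => by rw [heq]
    -- determine blocks by value profiles
    rcases Nat.lt_or_ge (i : ℕ) 1 with c1 | c1 <;>
      rcases Nat.lt_or_ge (i' : ℕ) 1 with d1 | d1
    · exact Fin.ext (by omega)
    · exfalso
      rcases Nat.lt_or_ge (i' : ℕ) (1 + (r + 1)) with d2 | d2
      · have a1 := (hval1 i c1).2; have a2 := (hval2 i' (by omega) d2).2
        rw [heq] at a1; omega
      rcases Nat.lt_or_ge (i' : ℕ) (1 + (r + 1) + (r + 1)) with d3 | d3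
      · have a1 := (hval1 i c1).1; have a2 := (hval3 i' (by omega) d3).1
        rw [heq] at a1; omega
      · have a1 := (hval1 i c1).1; have a2 := (hval4 i' (by omega)).1
        rw [heq] at a1; omega
    · exfalso
      rcases Nat.lt_or_ge (i : ℕ) (1 + (r + 1)) with c2 | c2
      · have a1 := (hval1 i' d1).2; have a2 := (hval2 i (by omega) c2).2
        rw [← heq] at a1; omega
      rcases Nat.lt_or_ge (i : ℕ) (1 + (r + 1) + (r + 1)) with c3 | c3
      · have a1 := (hval1 i' d1).1; have a2 := (hval3 i (by omega) c3).1
        rw [← heq] at a1; omega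
      · have a1 := (hval1 i' d1).1; have a2 := (hval4 i (by omega)).1
        rw [← heq] at a1; omega
    · rcases Nat.lt_or_ge (i : ℕ) (1 + (r + 1)) with c2 | c2 <;>
        rcases Nat.lt_or_ge (i' : ℕ) (1 + (r + 1)) with d2 | d2
      · -- both in P block
        rw [hfdef, blockFun_eq2 (by omega) c2 (by omega),
          blockFun_eq2 (by omega) d2 (by omega)] at heq
        have := congrArg Fin.val (hePinj heq)
        simp only at this
        exact Fin.ext (by omega)
      · exfalso
        rcases Nat.lt_or_ge (i' : ℕ) (1 + (r + 1) + (r + 1)) with d3 | d3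
        · have a1 := (hval2 i (by omega) c2).1; have a2 := (hval3 i' (by omega) d3).1
          rw [heq] at a1; omega
        · have a1 := (hval2 i (by omega) c2).1; have a2 := (hval4 i' (by omega)).1
          rw [heq] at a1; omega
      · exfalso
        rcases Nat.lt_or_ge (i : ℕ) (1 + (r + 1) + (r + 1)) with c3 | c3
        · have a1 := (hval2 i' (by omega) d2).1; have a2 := (hval3 i (by omega) c3).1
          rw [← heq] at a1; omega
        · have a1 := (hval2 i' (by omega) d2).1; have a2 := (hval4 i (by omega)).1
          rw [← heq] at a1; omega
      · -- both beyond P block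
        rcases Nat.lt_or_ge (i : ℕ) (1 + (r + 1) + (r + 1)) with c3 | c3 <;>
          rcases Nat.lt_or_ge (i' : ℕ) (1 + (r + 1) + (r + 1)) with d3 | d3
        · rw [hfdef, blockFun_eq3 (by omega) c3 (by omega),
            blockFun_eq3 (by omega) d3 (by omega)] at heq
          have := congrArg Fin.val (heQinj heq)
          simp only at this
          exact Fin.ext (by omega)
        · exfalso
          have a1 := (hval3 i (by omega) c3).2; have a2 := (hval4 i' (by omega)).2
          rw [heq] at a1; omega
        · exfalso
          have a1 := (hval3 i' (by omega) d3).2; have a2 := (hval4 i (by omega)).2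
          rw [← heq] at a1; omega
        · exact Fin.ext (by omega)
  refine ⟨f, ![j₁, j₂], hfinj, ?_, ?_⟩
  · intro a b hab
    fin_cases a <;> fin_cases b <;> simp_all <;> exact absurd hab hj
  · intro i j
    have hjval : (![j₁, j₂] j = j₁ ∧ (j : ℕ) = 0) ∨ (![j₁, j₂] j = j₂ ∧ (j : ℕ) = 1) := by
      fin_cases j <;> simp
    unfold Fabcd
    rcases Nat.lt_or_ge (i : ℕ) 1 with c1 | c1
    · rw [if_pos c1]
      rcases hjval with ⟨hg, _⟩ | ⟨hg, _⟩ <;> rw [hg]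
      exacts [(hval1 i c1).1, (hval1 i c1).2]
    rcases Nat.lt_or_ge (i : ℕ) (1 + (r + 1)) with c2 | c2
    · rw [if_neg (by omega), if_pos c2]
      rcases hjval with ⟨hg, hj0⟩ | ⟨hg, hj1⟩
      · rw [hg, if_pos hj0]; exact (hval2 i (by omega) c2).1
      · rw [hg, if_neg (by omega)]; exact (hval2 i (by omega) c2).2
    rcases Nat.lt_or_ge (i : ℕ) (1 + (r + 1) + (r + 1)) with c3 | c3
    · rw [if_neg (by omega), if_neg (by omega), if_pos c3]
      rcases hjval with ⟨hg, hj0⟩ | ⟨hg, hj1⟩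
      · rw [hg, if_pos hj0]; exact (hval3 i (by omega) c3).1
      · rw [hg, if_neg (by omega)]; exact (hval3 i (by omega) c3).2
    · rw [if_neg (by omega), if_neg (by omega), if_neg (by omega)]
      rcases hjval with ⟨hg, _⟩ | ⟨hg, _⟩ <;> rw [hg]
      exacts [(hval4 i (by omega)).1, (hval4 i (by omega)).2]


lemma matrix_bound {m n r k : ℕ} (hr : 1 ≤ r) (hm : 1 ≤ m) (hkm : k ≤ m)
    (A : MatN m n) (hR : RMat 2 A) (hSi : SimpleM A) (hcol : ∀ j, colSum A j = k)
    (hAv : AvoidsFam A {⟨1 + (r + 1) + (r + 1) + 1, 2, Fabcd 1 (r + 1) (r + 1) 1⟩}) :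
    ((k ≠ r + 1 ∧ k ≠ m - r - 1) → n ≤ Cbig r * m ^ r) ∧ n ≤ Cbig r * m ^ (r + 1) := by
  set S : Fin n → Finset (Fin m) := fun j => Finset.univ.filter (fun i => A i j = 1)
    with hSdef
  have hmemS : ∀ i j, i ∈ S j ↔ A i j = 1 := by
    intro i j; rw [hSdef]; simp
  have hzeroone : ∀ i j, A i j = 0 ∨ A i j = 1 := by
    intro i j; have := hR i j; omega
  have hSinj : Function.Injective S := by
    intro j₁ j₂ h
    apply hSi
    intro i
    have h1 : A i j₁ = 1 → A i j₂ = 1 := fun hh => (hmemS i j₂).mp (h ▸ (hmemS i j₁).mpr hh)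
    have h2 : A i j₂ = 1 → A i j₁ = 1 := fun hh => (hmemS i j₁).mp (h.symm ▸ (hmemS i j₂).mpr hh)
    rcases hzeroone i j₁ with hh | hh <;> rcases hzeroone i j₂ with hh' | hh' <;> omega
  set F : Finset (Finset (Fin m)) := Finset.univ.image S with hFdef
  have hFcard : F.card = n := by
    rw [hFdef, Finset.card_image_of_injective _ hSinj, card_univ, Fintype.card_fin]
  have hUF : ∀ B ∈ F, B.card = k := by
    intro B hB
    rw [hFdef, mem_image] at hB
    obtain ⟨j, _, rfl⟩ := hB
    exact hcol j
  have hPF : PropP m r F := by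
    intro A' hA' B' hB' hne hint huni
    rw [hFdef, mem_image] at hA' hB'
    obtain ⟨j₁, _, rfl⟩ := hA'
    obtain ⟨j₂, _, rfl⟩ := hB'
    have hj : j₁ ≠ j₂ := fun h => hne (by rw [h])
    by_contra hgt
    push_neg at hgt
    have hcards : (S j₁).card = (S j₂).card := by
      have e1 : (S j₁).card = k := hcol j₁
      have e2 : (S j₂).card = k := hcol j₂
      rw [e1, e2]
    have hcard2 : r + 1 ≤ (S j₂ \ S j₁).card := by
      have := card_sdiff_eq_of_card_eq hcards
      omega
    obtain ⟨P, hPsub, hPcard⟩ := Finset.exists_subset_card_eq (by omega : r + 1 ≤ (S j₁ \ S j₂).card)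
    obtain ⟨Q, hQsub, hQcard⟩ := Finset.exists_subset_card_eq hcard2
    obtain ⟨x₀, hx₀⟩ := hint
    rw [mem_inter] at hx₀
    have hw : ∃ w, w ∉ S j₁ ∪ S j₂ := by
      by_contra hcon
      push_neg at hcon
      exact huni (Finset.eq_univ_iff_forall.mpr hcon)
    obtain ⟨w₀, hw₀⟩ := hw
    rw [mem_union] at hw₀
    push_neg at hw₀
    have hone : ∀ (i : Fin m) (j : Fin n), i ∈ S j → A i j = 1 := fun i j hh => (hmemS i j).mp hh
    have hzero : ∀ (i : Fin m) (j : Fin n), i ∉ S j → A i j = 0 := by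
      intro i j hh
      rcases hzeroone i j with h | h
      · exact h
      · exact absurd ((hmemS i j).mpr h) hh
    have hconf : IsConfig (Fabcd 1 (r + 1) (r + 1) 1) A := by
      apply build_config A j₁ j₂ hj x₀ (hone _ _ hx₀.1) (hone _ _ hx₀.2) P Q hPcard hQcard
      · exact fun i hi => hone _ _ (mem_sdiff.mp (hPsub hi)).1
      · exact fun i hi => hzero _ _ (mem_sdiff.mp (hPsub hi)).2
      · exact fun i hi => hzero _ _ (mem_sdiff.mp (hQsub hi)).2
      · exact fun i hi => hone _ _ (mem_sdiff.mp (hQsub hi)).1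
      · exact hzero _ _ hw₀.1
      · exact hzero _ _ hw₀.2
    exact hAv ⟨1 + (r + 1) + (r + 1) + 1, 2, Fabcd 1 (r + 1) (r + 1) 1⟩ rfl hconf
  have := family_full hr hm hkm F hUF hPF
  rw [hFcard] at this
  exact this


end Stmt15Aux

/-- For `r ≥ 1` there is a constant `c` such that for all `m ≥ 1` and
`k ≤ m`: if `k ∉ {r+1, r+2, m-r-2, m-r-1}` then
`forb_k(m, 2, {F_{1,r+1,r+1,1}}) ≤ c·m^r`, and if `k ∈ {r+1, r+2, m-r-2, m-r-1}` then
`forb_k(m, 2, {F_{1,r+1,r+1,1}}) ≤ c·m^{r+1}`. -/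
theorem stmt15 (r : ℕ) (hr : 1 ≤ r) :
    ∃ c : ℕ, ∀ m : ℕ, 1 ≤ m → ∀ k : ℕ, k ≤ m →
      ((k ≠ r + 1 ∧ k ≠ r + 2 ∧ k ≠ m - r - 2 ∧ k ≠ m - r - 1) →
        forbK k m 2 {⟨1 + (r + 1) + (r + 1) + 1, 2, Fabcd 1 (r + 1) (r + 1) 1⟩} ≤
          c * m ^ r) ∧
      ((k = r + 1 ∨ k = r + 2 ∨ k = m - r - 2 ∨ k = m - r - 1) →
        forbK k m 2 {⟨1 + (r + 1) + (r + 1) + 1, 2, Fabcd 1 (r + 1) (r + 1) 1⟩} ≤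
          c * m ^ (r + 1)) := by
  refine ⟨Stmt15Aux.Cbig r, ?_⟩
  intro m hm k hkm
  have hne : { n : ℕ | ∃ A : MatN m n, RMat 2 A ∧ SimpleM A ∧ (∀ j, colSum A j = k) ∧
      AvoidsFam A {⟨1 + (r + 1) + (r + 1) + 1, 2, Fabcd 1 (r + 1) (r + 1) 1⟩} }.Nonempty := by
    refine ⟨0, Matrix.of (fun i (j : Fin 0) => j.elim0), ?_, ?_, ?_, ?_⟩
    · intro i j; exact j.elim0
    · intro j₁ j₂ _; exact j₁.elim0
    · intro j; exact j.elim0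
    · intro Fm hFm hcfg
      rw [Set.mem_singleton_iff] at hFm
      subst hFm
      obtain ⟨f, g, _, _, _⟩ := hcfg
      exact (g 0).elim0
  constructor
  · rintro ⟨h1, _, _, h4⟩
    unfold forbK
    apply csSup_le hne
    rintro n ⟨A, hR, hS, hcol, hAv⟩
    exact (Stmt15Aux.matrix_bound hr hm hkm A hR hS hcol hAv).1 ⟨h1, h4⟩
  · intro _
    unfold forbK
    apply csSup_le hne
    rintro n ⟨A, hR, hS, hcol, hAv⟩
    exact (Stmt15Aux.matrix_bound hr hm hkm A hR hS hcol hAv).2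
end

section
/- Let ℓ ≥ 2 and b ≥ 1. There is a constant C (depending only on ℓ and b) such that every m-rowed 3-matrix M satisfying: (i) there are no two columns i, j of M and b rows on which column i has entry 1 and column j has entry 0; (ii) whenever i < j, column i of M contains strictly more 1's than column j; and (iii) M contains no member of 𝒯_ℓ(3) \ 𝒯_ℓ(2) as a configuration, has fewer than C columns. -/
private lemma fiber_pigeon {β : Type*} [Fintype β] [DecidableEq β] [Nonempty β]
    (S : Finset ℕ) (f : ℕ → β) (k : ℕ) (h : Fintype.card β * k ≤ S.card) :
    ∃ v : β, k ≤ (S.filter fun s => f s = v).card := by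
  obtain ⟨v, _, hv⟩ := Finset.exists_le_card_fiber_of_mul_le_card_of_maps_to
    (f := f) (s := S) (t := Finset.univ) (fun a _ => Finset.mem_univ _)
    Finset.univ_nonempty (by simpa using h)
  exact ⟨v, hv⟩

private lemma EH2 (c : ℕ) : ∀ T Q : ℕ, ∃ N : ℕ, ∀ (χ : ℕ → ℕ → Fin (c+1)) (S : Finset ℕ),
    N ≤ S.card →
      ∃ (x : ℕ → ℕ) (S' : Finset ℕ),
        (∀ i j, i < j → j ≤ T → x i < x j) ∧ (∀ i, i ≤ T → x i ∈ S) ∧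
        S' ⊆ S ∧ Q ≤ S'.card ∧ (∀ s ∈ S', ∀ i, i ≤ T → x i < s) ∧
        (∀ i, i ≤ T → ∀ s ∈ S', ∀ s' ∈ S', χ (x i) s = χ (x i) s') ∧
        (∀ i j, i < j → j ≤ T → ∀ s ∈ S', χ (x i) (x j) = χ (x i) s) := by
  intro T
  induction T with
  | zero =>
    intro Q
    refine ⟨(c+1) * Q + 1, fun χ S hS => ?_⟩
    have hne : S.Nonempty := Finset.card_pos.mp (by omega)
    set m := S.min' hne with hm
    have hrest : (c+1) * Q ≤ (S.erase m).card := by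
      rw [Finset.card_erase_of_mem (S.min'_mem hne)]; omega
    obtain ⟨v, hv⟩ := fiber_pigeon (S.erase m) (χ m) Q (by simpa using hrest)
    refine ⟨fun _ => m, (S.erase m).filter (fun s => χ m s = v), ?_, ?_, ?_, hv, ?_, ?_, ?_⟩
    · intro i j hij hj; omega
    · intro i _; exact S.min'_mem hne
    · exact (Finset.filter_subset _ _).trans (S.erase_subset m)
    · intro s hs i _
      have hs' := Finset.mem_of_mem_filter s hs
      have := Finset.mem_erase.mp hs'
      exact lt_of_le_of_ne (S.min'_le s this.2) (Ne.symm this.1)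
    · intro i hi s hs s' hs'
      interval_cases i
      rw [(Finset.mem_filter.mp hs).2, (Finset.mem_filter.mp hs').2]
    · intro i j hij hj; omega
  | succ T ih =>
    intro Q
    obtain ⟨N, hN⟩ := ih ((c+1) * Q + 1)
    refine ⟨N, fun χ S hS => ?_⟩
    obtain ⟨x, S', hmono, hmem, hsub, hcard, hgt, hpi, hpij⟩ := hN χ S hS
    have hne : S'.Nonempty := Finset.card_pos.mp (by omega)
    set m := S'.min' hne with hm
    have hrest : (c+1) * Q ≤ (S'.erase m).card := by
      rw [Finset.card_erase_of_mem (S'.min'_mem hne)]; omega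
    obtain ⟨v, hv⟩ := fiber_pigeon (S'.erase m) (χ m) Q (by simpa using hrest)
    set S'' := (S'.erase m).filter (fun s => χ m s = v) with hS''
    have hsub'' : S'' ⊆ S' := (Finset.filter_subset _ _).trans (S'.erase_subset m)
    set x' : ℕ → ℕ := fun i => if i ≤ T then x i else m with hx'
    have hxeq : ∀ i, i ≤ T → x' i = x i := fun i hi => by simp [hx', hi]
    have hxnew : x' (T+1) = m := by simp [hx']
    refine ⟨x', S'', ?_, ?_, hsub''.trans hsub, hv, ?_, ?_, ?_⟩
    · intro i j hij hj
      rcases Nat.lt_or_ge j (T+1) with h | h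
      · rw [hxeq i (by omega), hxeq j (by omega)]; exact hmono i j hij (by omega)
      · have hj' : j = T + 1 := by omega
        rw [hj', hxnew, hxeq i (by omega)]
        exact hgt m (S'.min'_mem hne) i (by omega)
    · intro i hi
      rcases Nat.lt_or_ge i (T+1) with h | h
      · rw [hxeq i (by omega)]; exact hmem i (by omega)
      · have : i = T+1 := by omega
        rw [this, hxnew]; exact hsub (S'.min'_mem hne)
    · intro s hs i hi
      have hsS' : s ∈ S'.erase m := Finset.mem_of_mem_filter s hs
      have hsm := Finset.mem_erase.mp hsS'
      rcases Nat.lt_or_ge i (T+1) with h | h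
      · rw [hxeq i (by omega)]; exact hgt s (hsub'' hs) i (by omega)
      · have : i = T+1 := by omega
        rw [this, hxnew]
        exact lt_of_le_of_ne (S'.min'_le s hsm.2) (Ne.symm hsm.1)
    · intro i hi s hs s' hs'
      rcases Nat.lt_or_ge i (T+1) with h | h
      · rw [hxeq i (by omega)]; exact hpi i (by omega) s (hsub'' hs) s' (hsub'' hs')
      · have : i = T+1 := by omega
        rw [this, hxnew, (Finset.mem_filter.mp hs).2, (Finset.mem_filter.mp hs').2]
    · intro i j hij hj s hs
      rcases Nat.lt_or_ge j (T+1) with h | h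
      · rw [hxeq i (by omega), hxeq j (by omega)]
        exact hpij i j hij (by omega) s (hsub'' hs)
      · have hj' : j = T + 1 := by omega
        rw [hj', hxnew, hxeq i (by omega)]
        exact hpi i (by omega) m (S'.min'_mem hne) s (hsub'' hs)

private lemma EH3 (c : ℕ) : ∀ T Q : ℕ, ∃ N : ℕ, ∀ (χ : ℕ → ℕ → ℕ → Fin (c+1)) (S : Finset ℕ),
    N ≤ S.card →
      ∃ (x : ℕ → ℕ) (S' : Finset ℕ),
        (∀ i j, i < j → j ≤ T → x i < x j) ∧ (∀ i, i ≤ T → x i ∈ S) ∧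
        S' ⊆ S ∧ Q ≤ S'.card ∧ (∀ s ∈ S', ∀ i, i ≤ T → x i < s) ∧
        (∀ i j, i < j → j ≤ T → ∀ s ∈ S', ∀ s' ∈ S', χ (x i) (x j) s = χ (x i) (x j) s') ∧
        (∀ i j k, i < j → j < k → k ≤ T → ∀ s ∈ S', χ (x i) (x j) (x k) = χ (x i) (x j) s) := by
  intro T
  induction T with
  | zero =>
    intro Q
    refine ⟨Q + 1, fun χ S hS => ?_⟩
    have hne : S.Nonempty := Finset.card_pos.mp (by omega)
    set m := S.min' hne with hm
    refine ⟨fun _ => m, S.erase m, ?_, ?_, S.erase_subset m, ?_, ?_, ?_, ?_⟩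
    · intro i j hij hj; omega
    · intro i _; exact S.min'_mem hne
    · rw [Finset.card_erase_of_mem (S.min'_mem hne)]; omega
    · intro s hs i _
      have := Finset.mem_erase.mp hs
      exact lt_of_le_of_ne (S.min'_le s this.2) (Ne.symm this.1)
    · intro i j hij hj; omega
    · intro i j k hij hjk hk; omega
  | succ T ih =>
    intro Q
    obtain ⟨N, hN⟩ := ih ((c+1)^(T+2) * Q + 1)
    refine ⟨N, fun χ S hS => ?_⟩
    obtain ⟨x, S', hmono, hmem, hsub, hcard, hgt, hpij, htri⟩ := hN χ S hS
    have hne : S'.Nonempty := Finset.card_pos.mp (by omega)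
    set m := S'.min' hne with hm
    set x' : ℕ → ℕ := fun i => if i ≤ T then x i else m with hx'
    have hxeq : ∀ i, i ≤ T → x' i = x i := fun i hi => by simp [hx', hi]
    have hxnew : x' (T+1) = m := by simp [hx']
    have hrest : (c+1)^(T+2) * Q ≤ (S'.erase m).card := by
      rw [Finset.card_erase_of_mem (S'.min'_mem hne)]; omega
    set F : ℕ → (Fin (T+2) → Fin (c+1)) := fun s i => χ (x' i.val) m s with hF
    obtain ⟨v, hv⟩ := fiber_pigeon (S'.erase m) F Q (by
      rw [Fintype.card_fun, Fintype.card_fin, Fintype.card_fin]; exact hrest)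
    set S'' := (S'.erase m).filter (fun s => F s = v) with hS''
    have hsub'' : S'' ⊆ S' := (Finset.filter_subset _ _).trans (S'.erase_subset m)
    have hFconst : ∀ s ∈ S'', ∀ s' ∈ S'', ∀ i, i ≤ T+1 → χ (x' i) m s = χ (x' i) m s' := by
      intro s hs s' hs' i hi
      have h1 := (Finset.mem_filter.mp hs).2
      have h2 := (Finset.mem_filter.mp hs').2
      have := congrFun (h1.trans h2.symm) ⟨i, by omega⟩
      simpa [hF] using this
    refine ⟨x', S'', ?_, ?_, hsub''.trans hsub, hv, ?_, ?_, ?_⟩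
    · intro i j hij hj
      rcases Nat.lt_or_ge j (T+1) with h | h
      · rw [hxeq i (by omega), hxeq j (by omega)]; exact hmono i j hij (by omega)
      · have hj' : j = T + 1 := by omega
        rw [hj', hxnew, hxeq i (by omega)]
        exact hgt m (S'.min'_mem hne) i (by omega)
    · intro i hi
      rcases Nat.lt_or_ge i (T+1) with h | h
      · rw [hxeq i (by omega)]; exact hmem i (by omega)
      · have : i = T+1 := by omega
        rw [this, hxnew]; exact hsub (S'.min'_mem hne)
    · intro s hs i hi
      have hsS' : s ∈ S'.erase m := Finset.mem_of_mem_filter s hs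
      have hsm := Finset.mem_erase.mp hsS'
      rcases Nat.lt_or_ge i (T+1) with h | h
      · rw [hxeq i (by omega)]; exact hgt s (hsub'' hs) i (by omega)
      · have : i = T+1 := by omega
        rw [this, hxnew]
        exact lt_of_le_of_ne (S'.min'_le s hsm.2) (Ne.symm hsm.1)
    · intro i j hij hj s hs s' hs'
      rcases Nat.lt_or_ge j (T+1) with h | h
      · rw [hxeq i (by omega), hxeq j (by omega)]
        exact hpij i j hij (by omega) s (hsub'' hs) s' (hsub'' hs')
      · have hj' : j = T + 1 := by omega
        have e1 : χ (x' i) (x' j) s = χ (x' i) m s := by rw [hj', hxnew]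
        have e2 : χ (x' i) (x' j) s' = χ (x' i) m s' := by rw [hj', hxnew]
        rw [e1, e2]
        exact hFconst s hs s' hs' i (by omega)
    · intro i j k hij hjk hk s hs
      rcases Nat.lt_or_ge k (T+1) with h | h
      · rw [hxeq i (by omega), hxeq j (by omega), hxeq k (by omega)]
        exact htri i j k hij hjk (by omega) s (hsub'' hs)
      · have hk' : k = T + 1 := by omega
        rw [hk', hxnew, hxeq i (by omega), hxeq j (by omega)]
        exact hpij i j hij (by omega) m (S'.min'_mem hne) s (hsub'' hs)

private lemma ramsey2 (c L : ℕ) : ∃ N : ℕ, ∀ (χ : ℕ → ℕ → Fin (c+1)) (S : Finset ℕ),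
    N ≤ S.card → ∃ (y : ℕ → ℕ) (v : Fin (c+1)),
      (∀ i j, i < j → j ≤ L → y i < y j) ∧ (∀ i, i ≤ L → y i ∈ S) ∧
      (∀ i j, i < j → j ≤ L → χ (y i) (y j) = v) := by
  set T := (c+1) * (L+1) with hT
  obtain ⟨N, hN⟩ := EH2 c T 1
  refine ⟨N, fun χ S hS => ?_⟩
  obtain ⟨x, S', hmono, hmem, hsub, hcard, hgt, hpi, hpij⟩ := hN χ S hS
  have hne : S'.Nonempty := Finset.card_pos.mp (by omega)
  set s₀ := S'.min' hne with hs₀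
  have hs₀mem : s₀ ∈ S' := S'.min'_mem hne
  set ρ : ℕ → Fin (c+1) := fun i => χ (x i) s₀ with hρ
  obtain ⟨v, hv⟩ := fiber_pigeon (Finset.range (T+1)) ρ (L+1) (by
    rw [Fintype.card_fin, Finset.card_range]; omega)
  obtain ⟨G, hGsub, hGcard⟩ := Finset.exists_subset_card_eq hv
  set e := G.orderEmbOfFin hGcard with he
  have heG : ∀ i : Fin (L+1), e i ∈ G := fun i => G.orderEmbOfFin_mem hGcard i
  have heT : ∀ i : Fin (L+1), e i ≤ T := by
    intro i
    have := Finset.mem_range.mp (Finset.mem_of_mem_filter _ (hGsub (heG i)))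
    omega
  have heρ : ∀ i : Fin (L+1), ρ (e i) = v := by
    intro i
    exact (Finset.mem_filter.mp (hGsub (heG i))).2
  set idx : ℕ → Fin (L+1) := fun i => ⟨min i L, by omega⟩ with hidx
  have hidxeq : ∀ i, i ≤ L → (idx i : ℕ) = min i L := fun i _ => rfl
  have hidxlt : ∀ i j, i < j → j ≤ L → idx i < idx j := by
    intro i j hij hj
    simp only [hidx, Fin.mk_lt_mk]
    omega
  refine ⟨fun i => x (e (idx i)), v, ?_, ?_, ?_⟩
  · intro i j hij hj
    exact hmono _ _ ((G.orderEmbOfFin hGcard).strictMono (hidxlt i j hij hj)) (heT _)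
  · intro i _; exact hmem _ (heT _)
  · intro i j hij hj
    have h1 : e (idx i) < e (idx j) := (G.orderEmbOfFin hGcard).strictMono (hidxlt i j hij hj)
    rw [hpij _ _ h1 (heT _) s₀ hs₀mem]
    exact heρ (idx i)

private lemma ramsey3 (c L : ℕ) : ∃ N : ℕ, ∀ (χ : ℕ → ℕ → ℕ → Fin (c+1)) (S : Finset ℕ),
    N ≤ S.card → ∃ (y : ℕ → ℕ) (v : Fin (c+1)),
      (∀ i j, i < j → j ≤ L → y i < y j) ∧ (∀ i, i ≤ L → y i ∈ S) ∧
      (∀ i j k, i < j → j < k → k ≤ L → χ (y i) (y j) (y k) = v) := by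
  obtain ⟨N₂, hN₂⟩ := ramsey2 c L
  obtain ⟨N₃, hN₃⟩ := EH3 c N₂ 1
  refine ⟨N₃, fun χ S hS => ?_⟩
  obtain ⟨x, S', hmono, hmem, hsub, hcard, hgt, hpij, htri⟩ := hN₃ χ S hS
  have hne : S'.Nonempty := Finset.card_pos.mp (by omega)
  set s₀ := S'.min' hne with hs₀
  have hs₀mem : s₀ ∈ S' := S'.min'_mem hne
  obtain ⟨z, v, hzmono, hzmem, hzpair⟩ := hN₂ (fun p q => χ (x p) (x q) s₀)
    (Finset.range (N₂+1)) (by rw [Finset.card_range]; omega)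
  have hzT : ∀ i, i ≤ L → z i ≤ N₂ := by
    intro i hi
    have := Finset.mem_range.mp (hzmem i hi)
    omega
  refine ⟨fun i => x (z i), v, ?_, ?_, ?_⟩
  · intro i j hij hj
    exact hmono _ _ (hzmono i j hij hj) (hzT j hj)
  · intro i hi; exact hmem _ (hzT i hi)
  · intro i j k hij hjk hk
    have h1 : z i < z j := hzmono i j hij (by omega)
    have h2 : z j < z k := hzmono j k hjk hk
    rw [htri _ _ _ h1 h2 (hzT k hk) s₀ hs₀mem]
    exact hzpair i j hij (by omega)

private lemma notin_TFam2 {ℓ : ℕ} (X : MatN ℓ ℓ) (i j : Fin ℓ) (h : X i j = 2) :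
    (⟨ℓ, ℓ, X⟩ : CMat) ∉ TFam ℓ 2 := by
  rintro ⟨a, b, ha, hb, hab, hc | hc⟩
  · injection hc with h1 h2' h3
    rw [h3] at h
    simp only [Imat] at h
    split_ifs at h <;> omega
  · injection hc with h1 h2' h3
    rw [h3] at h
    simp only [Tmat] at h
    split_ifs at h <;> omega

/-- For `ℓ ≥ 2`, `b ≥ 1`, there is a constant `C` such that every
`m`-rowed 3-matrix `M` with (i) no `b×2` submatrix `[𝟏_b 𝟎_b]`, (ii) strictly
decreasing column sums, and (iii) avoiding `𝒯_ℓ(3) \ 𝒯_ℓ(2)`, has fewer than `C`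
columns. -/
theorem stmt17 (ℓ b : ℕ) (hℓ : 2 ≤ ℓ) (hb : 1 ≤ b) :
    ∃ C : ℕ, ∀ (m n : ℕ) (M : MatN m n), RMat 3 M →
      (¬ ∃ (f : Fin b → Fin m) (j₁ j₂ : Fin n), Function.Injective f ∧ j₁ < j₂ ∧
          ∀ a : Fin b, M (f a) j₁ = 1 ∧ M (f a) j₂ = 0) →
      (∀ j₁ j₂ : Fin n, j₁ < j₂ → colSum M j₂ < colSum M j₁) →
      AvoidsFam M (TFam ℓ 3 \ TFam ℓ 2) →
      n < C := by
  classical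
  set L := 2*ℓ + b + 2 with hLdef
  obtain ⟨N₃, hN₃⟩ := ramsey3 26 L
  refine ⟨b * (N₃ + 1) + 2, ?_⟩
  intro m n M hR hPat hDec hAvoid
  by_contra hn
  push_neg at hn
  have hbN : 1 ≤ b * (N₃ + 1) := Nat.one_le_iff_ne_zero.mpr (by positivity)
  have hn2 : 2 ≤ n := by omega
  have hm : 0 < m := by
    rcases Nat.eq_zero_or_pos m with h0 | h0
    · exfalso
      have h1 := hDec ⟨0, by omega⟩ ⟨1, by omega⟩ (Fin.mk_lt_mk.mpr (by omega))
      subst h0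
      simp [colSum] at h1
    · exact h0
  -- column sums decrease with gaps
  have hgap : ∀ (d : ℕ) (p q : Fin n), (q : ℕ) = (p : ℕ) + d →
      colSum M q + d ≤ colSum M p := by
    intro d
    induction d with
    | zero =>
      intro p q h
      have : p = q := Fin.ext (by omega)
      subst this; omega
    | succ d ih =>
      intro p q h
      have hq' : (p:ℕ) + d < n := by have := q.isLt; omega
      have h1 := ih p ⟨(p:ℕ) + d, hq'⟩ rfl
      have h2 := hDec ⟨(p:ℕ)+d, hq'⟩ q (by rw [Fin.lt_def]; simp; omega)
      omega
  -- witness rows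
  have hwit : ∀ p q : Fin n, (p:ℕ) + b ≤ (q:ℕ) → ∃ r : Fin m, M r p = 1 ∧ M r q = 2 := by
    intro p q hpq
    by_contra hno
    push_neg at hno
    set A := Finset.univ.filter (fun r : Fin m => M r p = 1 ∧ M r q = 0) with hA
    have hgap' := hgap ((q:ℕ) - (p:ℕ)) p q (by omega)
    have hsplit : colSum M p ≤ colSum M q + A.card := by
      have hsub : Finset.univ.filter (fun r : Fin m => M r p = 1) ⊆
          (Finset.univ.filter (fun r : Fin m => M r q = 1)) ∪ A := by
        intro r hr
        have hr1 : M r p = 1 := (Finset.mem_filter.mp hr).2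
        have h3 := hR r q
        have hne2 : M r q ≠ 2 := hno r hr1
        rcases (by omega : M r q = 0 ∨ M r q = 1) with h | h
        · exact Finset.mem_union_right _ (Finset.mem_filter.mpr ⟨Finset.mem_univ _, hr1, h⟩)
        · exact Finset.mem_union_left _ (Finset.mem_filter.mpr ⟨Finset.mem_univ _, h⟩)
      calc colSum M p ≤ ((Finset.univ.filter (fun r : Fin m => M r q = 1)) ∪ A).card :=
            Finset.card_le_card hsub
        _ ≤ colSum M q + A.card := Finset.card_union_le _ _
    have hAb : b ≤ A.card := by omega
    obtain ⟨A', hA'sub, hA'card⟩ := Finset.exists_subset_card_eq hAb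
    apply hPat
    refine ⟨fun t => A'.orderEmbOfFin hA'card t, p, q, ?_, ?_, ?_⟩
    · exact (A'.orderEmbOfFin hA'card).injective
    · rw [Fin.lt_def]; omega
    · intro t
      have := hA'sub (A'.orderEmbOfFin_mem hA'card t)
      exact (Finset.mem_filter.mp this).2
  -- total witness function
  choose wf hwf1 hwf2 using hwit
  set W : ℕ → ℕ → Fin m := fun p q =>
    if h : p < n ∧ q < n ∧ p + b ≤ q then wf ⟨p, h.1⟩ ⟨q, h.2.1⟩ h.2.2 else ⟨0, hm⟩
    with hWdef
  have hW : ∀ p q : ℕ, ∀ (hp : p < n) (hq : q < n), p + b ≤ q →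
      M (W p q) ⟨p, hp⟩ = 1 ∧ M (W p q) ⟨q, hq⟩ = 2 := by
    intro p q hp hq hpq
    have hc : p < n ∧ q < n ∧ p + b ≤ q := ⟨hp, hq, hpq⟩
    simp only [hWdef, dif_pos hc]
    exact ⟨hwf1 _ _ _, hwf2 _ _ _⟩
  -- the column set
  set S : Finset ℕ := (Finset.range (N₃+1)).image (fun k => k * b) with hSdef
  have hScard : N₃ ≤ S.card := by
    rw [hSdef, Finset.card_image_of_injective _ (fun a a' h => by
      exact Nat.eq_of_mul_eq_mul_right (by omega) h), Finset.card_range]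
    omega
  have hSlt : ∀ s ∈ S, s < n := by
    intro s hs
    rw [hSdef, Finset.mem_image] at hs
    obtain ⟨k, hk, rfl⟩ := hs
    have hk' := Finset.mem_range.mp hk
    have e1 : k * b ≤ N₃ * b := Nat.mul_le_mul_right b (by omega)
    have e2 : b * (N₃ + 1) = N₃ * b + b := by ring
    omega
  have hSmul : ∀ s ∈ S, ∃ k, s = k * b := by
    intro s hs
    rw [hSdef, Finset.mem_image] at hs
    obtain ⟨k, _, rfl⟩ := hs
    exact ⟨k, rfl⟩
  -- apply Ramsey
  obtain ⟨y, v, hymono, hymem, hyhom⟩ := hN₃ (fun p q r =>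
    if h : p < n ∧ q < n ∧ r < n ∧ p + b ≤ q ∧ q + b ≤ r then
      (⟨M (W q r) ⟨p, h.1⟩ + 3 * M (W p q) ⟨r, h.2.2.1⟩ + 9 * M (W p r) ⟨q, h.2.1⟩, by
        have b1 := hR (W q r) ⟨p, h.1⟩
        have b2 := hR (W p q) ⟨r, h.2.2.1⟩
        have b3 := hR (W p r) ⟨q, h.2.1⟩
        omega⟩ : Fin 27)
    else 0) S hScard
  have hyl : ∀ i, i ≤ L → y i < n := fun i hi => hSlt _ (hymem i hi)
  have hygap : ∀ i j, i < j → j ≤ L → y i + b ≤ y j := by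
    intro i j hij hj
    obtain ⟨k, hk⟩ := hSmul _ (hymem i (by omega))
    obtain ⟨k', hk'⟩ := hSmul _ (hymem j hj)
    have hlt := hymono i j hij hj
    have hkk' : k < k' := by
      by_contra hc
      push_neg at hc
      have : k' * b ≤ k * b := Nat.mul_le_mul_right b hc
      omega
    have e1 : (k+1) * b ≤ k' * b := Nat.mul_le_mul_right b (by omega)
    rw [Nat.succ_mul] at e1
    omega
  set col : ℕ → Fin n := fun i => ⟨y (min i L), hyl _ (Nat.min_le_right i L)⟩ with hcoldef
  have hcolval : ∀ i, i ≤ L → (col i : ℕ) = y i := by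
    intro i hi
    simp [hcoldef, Nat.min_eq_left hi]
  have hcolmono : ∀ i j, i < j → j ≤ L → col i < col j := by
    intro i j hij hj
    rw [Fin.lt_def, hcolval i (by omega), hcolval j hj]
    exact hymono i j hij hj
  have hcoleq : ∀ (i : ℕ) (hi : i ≤ L) (h : y i < n), col i = ⟨y i, h⟩ :=
    fun i hi h => Fin.ext (hcolval i hi)
  -- diagonal values
  have hdiag : ∀ u u', u < u' → u' ≤ L →
      M (W (y u) (y u')) (col u) = 1 ∧ M (W (y u) (y u')) (col u') = 2 := by
    intro u u' hu hu'
    have h1 := hyl u (by omega)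
    have h2 := hyl u' hu'
    have h3 := hygap u u' hu hu'
    rw [hcoleq u (by omega) h1, hcoleq u' hu' h2]
    exact hW _ _ h1 h2 h3
  -- extraction of homogeneous values
  set A1 : ℕ := (v : ℕ) % 3 with hA1def
  set A2 : ℕ := (v : ℕ) / 3 % 3 with hA2def
  set A3 : ℕ := (v : ℕ) / 9 % 3 with hA3def
  have hkey : ∀ i j k, i < j → j < k → k ≤ L →
      M (W (y j) (y k)) (col i) = A1 ∧ M (W (y i) (y j)) (col k) = A2 ∧
      M (W (y i) (y k)) (col j) = A3 := by
    intro i j k hij hjk hk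
    have hc : y i < n ∧ y j < n ∧ y k < n ∧ y i + b ≤ y j ∧ y j + b ≤ y k :=
      ⟨hyl i (by omega), hyl j (by omega), hyl k hk,
        hygap i j hij (by omega), hygap j k hjk hk⟩
    have h := hyhom i j k hij hjk hk
    simp only [dif_pos hc] at h
    have hval := congrArg Fin.val h
    simp only [Fin.val_mk] at hval
    have b1 := hR (W (y j) (y k)) ⟨y i, hc.1⟩
    have b2 := hR (W (y i) (y j)) ⟨y k, hc.2.2.1⟩
    have b3 := hR (W (y i) (y k)) ⟨y j, hc.2.1⟩
    have hv27 : (v : ℕ) < 27 := v.isLt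
    rw [hcoleq i (by omega) hc.1, hcoleq k hk hc.2.2.1, hcoleq j (by omega) hc.2.1]
    refine ⟨?_, ?_, ?_⟩ <;> omega
  have hd1 : ∀ u u', u < u' → u' ≤ L → M (W (y u) (y u')) (col u) = 1 :=
    fun u u' h h' => (hdiag u u' h h').1
  have hd2 : ∀ u u', u < u' → u' ≤ L → M (W (y u) (y u')) (col u') = 2 :=
    fun u u' h h' => (hdiag u u' h h').2
  have hpast : ∀ t u u', t < u → u < u' → u' ≤ L → M (W (y u) (y u')) (col t) = A1 :=
    fun t u u' h1 h2 h3 => (hkey t u u' h1 h2 h3).1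
  have hfut : ∀ u u' t, u < u' → u' < t → t ≤ L → M (W (y u) (y u')) (col t) = A2 :=
    fun u u' t h1 h2 h3 => (hkey u u' t h1 h2 h3).2.1
  have hmid : ∀ u t u', u < t → t < u' → u' ≤ L → M (W (y u) (y u')) (col t) = A3 :=
    fun u t u' h1 h2 h3 => (hkey u t u' h1 h2 h3).2.2
  have hv27 : (v : ℕ) < 27 := v.isLt
  have hA1lt : A1 < 3 := by omega
  have hA2lt : A2 < 3 := by omega
  have hA3lt : A3 < 3 := by omega
  have hcolinj : ∀ i j, i ≤ L → j ≤ L → col i = col j → i = j := by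
    intro i j hi hj h
    have hval := congrArg Fin.val h
    rw [hcolval i hi, hcolval j hj] at hval
    by_contra hne
    rcases Nat.lt_or_ge i j with hc | hc
    · have := hymono i j hc hj; omega
    · have := hymono j i (by omega) hi; omega
  rcases (show A3 = 0 ∨ A3 = 1 ∨ A3 = 2 by omega) with hA3 | hA3 | hA3
  · -- A3 = 0 : violation of condition (i) at columns (col 0, col 1)
    apply hPat
    refine ⟨fun t => W (y 0) (y ((t:ℕ)+2)), col 0, col 1, ?_,
      hcolmono 0 1 (by omega) (by omega), ?_⟩
    · intro t t' h
      have h' : W (y 0) (y ((t:ℕ)+2)) = W (y 0) (y ((t':ℕ)+2)) := h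
      by_contra hne
      have hvne : (t:ℕ) ≠ (t':ℕ) := fun he => hne (Fin.ext he)
      have ht : (t:ℕ) < b := t.isLt; have ht' : (t':ℕ) < b := t'.isLt
      rcases Nat.lt_or_ge (t:ℕ) (t':ℕ) with hc | hc
      · have e1 := hd2 0 ((t:ℕ)+2) (by omega) (by omega)
        have e2 := hmid 0 ((t:ℕ)+2) ((t':ℕ)+2) (by omega) (by omega) (by omega)
        rw [h'] at e1; omega
      · have e1 := hd2 0 ((t':ℕ)+2) (by omega) (by omega)
        have e2 := hmid 0 ((t':ℕ)+2) ((t:ℕ)+2) (by omega) (by omega) (by omega)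
        rw [← h'] at e1; omega
    · intro t
      have ht : (t:ℕ) < b := t.isLt
      exact ⟨hd1 0 ((t:ℕ)+2) (by omega) (by omega),
        (hmid 0 1 ((t:ℕ)+2) (by omega) (by omega) (by omega)).trans hA3⟩
  · -- A3 = 1
    rcases (show A2 = 0 ∨ A2 = 1 ∨ A2 = 2 by omega) with hA2 | hA2 | hA2
    · -- A3 = 1, A2 = 0 : violation at columns (col 0, col L)
      apply hPat
      refine ⟨fun t => W (y 0) (y ((t:ℕ)+1)), col 0, col L, ?_,
        hcolmono 0 L (by omega) (by omega), ?_⟩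
      · intro t t' h
        have h' : W (y 0) (y ((t:ℕ)+1)) = W (y 0) (y ((t':ℕ)+1)) := h
        by_contra hne
        have hvne : (t:ℕ) ≠ (t':ℕ) := fun he => hne (Fin.ext he)
        have ht : (t:ℕ) < b := t.isLt; have ht' : (t':ℕ) < b := t'.isLt
        rcases Nat.lt_or_ge (t:ℕ) (t':ℕ) with hc | hc
        · have e1 := hd2 0 ((t:ℕ)+1) (by omega) (by omega)
          have e2 := hmid 0 ((t:ℕ)+1) ((t':ℕ)+1) (by omega) (by omega) (by omega)
          rw [h'] at e1; omega
        · have e1 := hd2 0 ((t':ℕ)+1) (by omega) (by omega)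
          have e2 := hmid 0 ((t':ℕ)+1) ((t:ℕ)+1) (by omega) (by omega) (by omega)
          rw [← h'] at e1; omega
      · intro t
        have ht : (t:ℕ) < b := t.isLt
        exact ⟨hd1 0 ((t:ℕ)+1) (by omega) (by omega),
          (hfut 0 ((t:ℕ)+1) L (by omega) (by omega) (by omega)).trans hA2⟩
    · -- A3 = 1, A2 = 1 : configuration Imat ℓ 2 1
      refine hAvoid ⟨ℓ, ℓ, Imat ℓ 2 1⟩
        ⟨⟨2, 1, by omega, by omega, by omega, Or.inl rfl⟩,
          notin_TFam2 _ ⟨0, by omega⟩ ⟨0, by omega⟩ (by simp [Imat])⟩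
        ⟨fun t => W (y 0) (y ((t:ℕ)+1)), fun u => col ((u:ℕ)+1), ?_, ?_, ?_⟩
      · intro t t' h
        have h' : W (y 0) (y ((t:ℕ)+1)) = W (y 0) (y ((t':ℕ)+1)) := h
        by_contra hne
        have hvne : (t:ℕ) ≠ (t':ℕ) := fun he => hne (Fin.ext he)
        have ht : (t:ℕ) < ℓ := t.isLt; have ht' : (t':ℕ) < ℓ := t'.isLt
        rcases Nat.lt_or_ge (t:ℕ) (t':ℕ) with hc | hc
        · have e1 := hd2 0 ((t:ℕ)+1) (by omega) (by omega)
          have e2 := hmid 0 ((t:ℕ)+1) ((t':ℕ)+1) (by omega) (by omega) (by omega)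
          rw [h'] at e1; omega
        · have e1 := hd2 0 ((t':ℕ)+1) (by omega) (by omega)
          have e2 := hmid 0 ((t':ℕ)+1) ((t:ℕ)+1) (by omega) (by omega) (by omega)
          rw [← h'] at e1; omega
      · intro u u' h
        have hu : (u:ℕ) < ℓ := u.isLt; have hu' : (u':ℕ) < ℓ := u'.isLt
        have := hcolinj ((u:ℕ)+1) ((u':ℕ)+1) (by omega) (by omega) h
        exact Fin.ext (by omega)
      · intro t u
        have ht : (t:ℕ) < ℓ := t.isLt; have hu : (u:ℕ) < ℓ := u.isLt
        simp only [Imat]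
        split_ifs with h
        · rw [h]
          exact hd2 0 ((u:ℕ)+1) (by omega) (by omega)
        · have hvne : (t:ℕ) ≠ (u:ℕ) := fun he => h (Fin.ext he)
          rcases Nat.lt_or_ge (u:ℕ) (t:ℕ) with hc | hc
          · exact (hmid 0 ((u:ℕ)+1) ((t:ℕ)+1) (by omega) (by omega) (by omega)).trans hA3
          · exact (hfut 0 ((t:ℕ)+1) ((u:ℕ)+1) (by omega) (by omega) (by omega)).trans hA2
    · -- A3 = 1, A2 = 2 : configuration Tmat ℓ 1 2
      refine hAvoid ⟨ℓ, ℓ, Tmat ℓ 1 2⟩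
        ⟨⟨1, 2, by omega, by omega, by omega, Or.inr rfl⟩,
          notin_TFam2 _ ⟨0, by omega⟩ ⟨0, by omega⟩ (by simp [Tmat])⟩
        ⟨fun t => W (y 0) (y ((t:ℕ)+1)), fun u => col ((u:ℕ)+1), ?_, ?_, ?_⟩
      · intro t t' h
        have h' : W (y 0) (y ((t:ℕ)+1)) = W (y 0) (y ((t':ℕ)+1)) := h
        by_contra hne
        have hvne : (t:ℕ) ≠ (t':ℕ) := fun he => hne (Fin.ext he)
        have ht : (t:ℕ) < ℓ := t.isLt; have ht' : (t':ℕ) < ℓ := t'.isLt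
        rcases Nat.lt_or_ge (t:ℕ) (t':ℕ) with hc | hc
        · have e1 := hd2 0 ((t:ℕ)+1) (by omega) (by omega)
          have e2 := hmid 0 ((t:ℕ)+1) ((t':ℕ)+1) (by omega) (by omega) (by omega)
          rw [h'] at e1; omega
        · have e1 := hd2 0 ((t':ℕ)+1) (by omega) (by omega)
          have e2 := hmid 0 ((t':ℕ)+1) ((t:ℕ)+1) (by omega) (by omega) (by omega)
          rw [← h'] at e1; omega
      · intro u u' h
        have hu : (u:ℕ) < ℓ := u.isLt; have hu' : (u':ℕ) < ℓ := u'.isLt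
        have := hcolinj ((u:ℕ)+1) ((u':ℕ)+1) (by omega) (by omega) h
        exact Fin.ext (by omega)
      · intro t u
        have ht : (t:ℕ) < ℓ := t.isLt; have hu : (u:ℕ) < ℓ := u.isLt
        simp only [Tmat]
        split_ifs with h
        · exact (hmid 0 ((u:ℕ)+1) ((t:ℕ)+1) (by omega) (by omega) (by omega)).trans hA3
        · rcases Nat.lt_or_ge (t:ℕ) (u:ℕ) with hc | hc
          · exact (hfut 0 ((t:ℕ)+1) ((u:ℕ)+1) (by omega) (by omega) (by omega)).trans hA2
          · have hte : (t:ℕ) = (u:ℕ) := by omega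
            rw [hte]
            exact hd2 0 ((u:ℕ)+1) (by omega) (by omega)
  · -- A3 = 2
    rcases (show A2 = 0 ∨ A2 = 1 ∨ A2 = 2 by omega) with hA2 | hA2 | hA2
    · -- A3 = 2, A2 = 0 : configuration Tmat ℓ 2 0
      refine hAvoid ⟨ℓ, ℓ, Tmat ℓ 2 0⟩
        ⟨⟨2, 0, by omega, by omega, by omega, Or.inr rfl⟩,
          notin_TFam2 _ ⟨1, by omega⟩ ⟨0, by omega⟩ (by simp [Tmat])⟩
        ⟨fun t => W (y 0) (y ((t:ℕ)+1)), fun u => col ((u:ℕ)+2), ?_, ?_, ?_⟩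
      · intro t t' h
        have h' : W (y 0) (y ((t:ℕ)+1)) = W (y 0) (y ((t':ℕ)+1)) := h
        by_contra hne
        have hvne : (t:ℕ) ≠ (t':ℕ) := fun he => hne (Fin.ext he)
        have ht : (t:ℕ) < ℓ := t.isLt; have ht' : (t':ℕ) < ℓ := t'.isLt
        rcases Nat.lt_or_ge (t:ℕ) (t':ℕ) with hc | hc
        · have e1 := hd2 0 ((t':ℕ)+1) (by omega) (by omega)
          have e2 := hfut 0 ((t:ℕ)+1) ((t':ℕ)+1) (by omega) (by omega) (by omega)
          rw [h'] at e2; omega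
        · have e1 := hd2 0 ((t:ℕ)+1) (by omega) (by omega)
          have e2 := hfut 0 ((t':ℕ)+1) ((t:ℕ)+1) (by omega) (by omega) (by omega)
          rw [← h'] at e2; omega
      · intro u u' h
        have hu : (u:ℕ) < ℓ := u.isLt; have hu' : (u':ℕ) < ℓ := u'.isLt
        have := hcolinj ((u:ℕ)+2) ((u':ℕ)+2) (by omega) (by omega) h
        exact Fin.ext (by omega)
      · intro t u
        have ht : (t:ℕ) < ℓ := t.isLt; have hu : (u:ℕ) < ℓ := u.isLt
        simp only [Tmat]
        split_ifs with h
        · rcases Nat.lt_or_ge ((u:ℕ)+2) ((t:ℕ)+1) with hc | hc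
          · exact (hmid 0 ((u:ℕ)+2) ((t:ℕ)+1) (by omega) (by omega) (by omega)).trans hA3
          · have he : (u:ℕ)+2 = (t:ℕ)+1 := by omega
            rw [he]
            exact hd2 0 ((t:ℕ)+1) (by omega) (by omega)
        · exact (hfut 0 ((t:ℕ)+1) ((u:ℕ)+2) (by omega) (by omega) (by omega)).trans hA2
    · -- A3 = 2, A2 = 1 : configuration Tmat ℓ 2 1
      refine hAvoid ⟨ℓ, ℓ, Tmat ℓ 2 1⟩
        ⟨⟨2, 1, by omega, by omega, by omega, Or.inr rfl⟩,
          notin_TFam2 _ ⟨1, by omega⟩ ⟨0, by omega⟩ (by simp [Tmat])⟩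
        ⟨fun t => W (y 0) (y ((t:ℕ)+1)), fun u => col ((u:ℕ)+2), ?_, ?_, ?_⟩
      · intro t t' h
        have h' : W (y 0) (y ((t:ℕ)+1)) = W (y 0) (y ((t':ℕ)+1)) := h
        by_contra hne
        have hvne : (t:ℕ) ≠ (t':ℕ) := fun he => hne (Fin.ext he)
        have ht : (t:ℕ) < ℓ := t.isLt; have ht' : (t':ℕ) < ℓ := t'.isLt
        rcases Nat.lt_or_ge (t:ℕ) (t':ℕ) with hc | hc
        · have e1 := hd2 0 ((t':ℕ)+1) (by omega) (by omega)
          have e2 := hfut 0 ((t:ℕ)+1) ((t':ℕ)+1) (by omega) (by omega) (by omega)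
          rw [h'] at e2; omega
        · have e1 := hd2 0 ((t:ℕ)+1) (by omega) (by omega)
          have e2 := hfut 0 ((t':ℕ)+1) ((t:ℕ)+1) (by omega) (by omega) (by omega)
          rw [← h'] at e2; omega
      · intro u u' h
        have hu : (u:ℕ) < ℓ := u.isLt; have hu' : (u':ℕ) < ℓ := u'.isLt
        have := hcolinj ((u:ℕ)+2) ((u':ℕ)+2) (by omega) (by omega) h
        exact Fin.ext (by omega)
      · intro t u
        have ht : (t:ℕ) < ℓ := t.isLt; have hu : (u:ℕ) < ℓ := u.isLt
        simp only [Tmat]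
        split_ifs with h
        · rcases Nat.lt_or_ge ((u:ℕ)+2) ((t:ℕ)+1) with hc | hc
          · exact (hmid 0 ((u:ℕ)+2) ((t:ℕ)+1) (by omega) (by omega) (by omega)).trans hA3
          · have he : (u:ℕ)+2 = (t:ℕ)+1 := by omega
            rw [he]
            exact hd2 0 ((t:ℕ)+1) (by omega) (by omega)
        · exact (hfut 0 ((t:ℕ)+1) ((u:ℕ)+2) (by omega) (by omega) (by omega)).trans hA2
    · -- A3 = 2, A2 = 2
      rcases (show A1 = 0 ∨ A1 = 1 ∨ A1 = 2 by omega) with hA1 | hA1 | hA1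
      · -- A1 = 0 : configuration Tmat ℓ 0 2
        refine hAvoid ⟨ℓ, ℓ, Tmat ℓ 0 2⟩
          ⟨⟨0, 2, by omega, by omega, by omega, Or.inr rfl⟩,
            notin_TFam2 _ ⟨0, by omega⟩ ⟨0, by omega⟩ (by simp [Tmat])⟩
          ⟨fun t => W (y (2*(t:ℕ))) (y L), fun u => col (2*(u:ℕ)+1), ?_, ?_, ?_⟩
        · intro t t' h
          have h' : W (y (2*(t:ℕ))) (y L) = W (y (2*(t':ℕ))) (y L) := h
          by_contra hne
          have hvne : (t:ℕ) ≠ (t':ℕ) := fun he => hne (Fin.ext he)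
          have ht : (t:ℕ) < ℓ := t.isLt; have ht' : (t':ℕ) < ℓ := t'.isLt
          rcases Nat.lt_or_ge (t:ℕ) (t':ℕ) with hc | hc
          · have e1 := hd1 (2*(t:ℕ)) L (by omega) (by omega)
            have e2 := hpast (2*(t:ℕ)) (2*(t':ℕ)) L (by omega) (by omega) (by omega)
            rw [h'] at e1; omega
          · have e1 := hd1 (2*(t':ℕ)) L (by omega) (by omega)
            have e2 := hpast (2*(t':ℕ)) (2*(t:ℕ)) L (by omega) (by omega) (by omega)
            rw [← h'] at e1; omega
        · intro u u' h
          have hu : (u:ℕ) < ℓ := u.isLt; have hu' : (u':ℕ) < ℓ := u'.isLt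
          have := hcolinj (2*(u:ℕ)+1) (2*(u':ℕ)+1) (by omega) (by omega) h
          exact Fin.ext (by omega)
        · intro t u
          have ht : (t:ℕ) < ℓ := t.isLt; have hu : (u:ℕ) < ℓ := u.isLt
          simp only [Tmat]
          split_ifs with h
          · exact (hpast (2*(u:ℕ)+1) (2*(t:ℕ)) L (by omega) (by omega) (by omega)).trans hA1
          · exact (hmid (2*(t:ℕ)) (2*(u:ℕ)+1) L (by omega) (by omega) (by omega)).trans hA3
      · -- A1 = 1 : configuration Tmat ℓ 1 2
        refine hAvoid ⟨ℓ, ℓ, Tmat ℓ 1 2⟩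
          ⟨⟨1, 2, by omega, by omega, by omega, Or.inr rfl⟩,
            notin_TFam2 _ ⟨0, by omega⟩ ⟨0, by omega⟩ (by simp [Tmat])⟩
          ⟨fun t => W (y (t:ℕ)) (y L), fun u => col ((u:ℕ)+1), ?_, ?_, ?_⟩
        · intro t t' h
          have h' : W (y (t:ℕ)) (y L) = W (y (t':ℕ)) (y L) := h
          by_contra hne
          have hvne : (t:ℕ) ≠ (t':ℕ) := fun he => hne (Fin.ext he)
          have ht : (t:ℕ) < ℓ := t.isLt; have ht' : (t':ℕ) < ℓ := t'.isLt
          rcases Nat.lt_or_ge (t:ℕ) (t':ℕ) with hc | hc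
          · have e1 := hd1 (t':ℕ) L (by omega) (by omega)
            have e2 := hmid (t:ℕ) (t':ℕ) L (by omega) (by omega) (by omega)
            rw [h'] at e2; omega
          · have e1 := hd1 (t:ℕ) L (by omega) (by omega)
            have e2 := hmid (t':ℕ) (t:ℕ) L (by omega) (by omega) (by omega)
            rw [← h'] at e2; omega
        · intro u u' h
          have hu : (u:ℕ) < ℓ := u.isLt; have hu' : (u':ℕ) < ℓ := u'.isLt
          have := hcolinj ((u:ℕ)+1) ((u':ℕ)+1) (by omega) (by omega) h
          exact Fin.ext (by omega)
        · intro t u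
          have ht : (t:ℕ) < ℓ := t.isLt; have hu : (u:ℕ) < ℓ := u.isLt
          simp only [Tmat]
          split_ifs with h
          · rcases Nat.lt_or_ge ((u:ℕ)+1) (t:ℕ) with hc | hc
            · exact (hpast ((u:ℕ)+1) (t:ℕ) L (by omega) (by omega) (by omega)).trans hA1
            · have he : (u:ℕ)+1 = (t:ℕ) := by omega
              rw [he]
              exact hd1 (t:ℕ) L (by omega) (by omega)
          · exact (hmid (t:ℕ) ((u:ℕ)+1) L (by omega) (by omega) (by omega)).trans hA3
      · -- A1 = 2 : configuration Imat ℓ 1 2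
        refine hAvoid ⟨ℓ, ℓ, Imat ℓ 1 2⟩
          ⟨⟨1, 2, by omega, by omega, by omega, Or.inl rfl⟩,
            notin_TFam2 _ ⟨0, by omega⟩ ⟨1, by omega⟩ (by simp [Imat, Fin.ext_iff])⟩
          ⟨fun t => W (y (t:ℕ)) (y L), fun u => col (u:ℕ), ?_, ?_, ?_⟩
        · intro t t' h
          have h' : W (y (t:ℕ)) (y L) = W (y (t':ℕ)) (y L) := h
          by_contra hne
          have hvne : (t:ℕ) ≠ (t':ℕ) := fun he => hne (Fin.ext he)
          have ht : (t:ℕ) < ℓ := t.isLt; have ht' : (t':ℕ) < ℓ := t'.isLt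
          rcases Nat.lt_or_ge (t:ℕ) (t':ℕ) with hc | hc
          · have e1 := hd1 (t:ℕ) L (by omega) (by omega)
            have e2 := hpast (t:ℕ) (t':ℕ) L (by omega) (by omega) (by omega)
            rw [h'] at e1; omega
          · have e1 := hd1 (t':ℕ) L (by omega) (by omega)
            have e2 := hpast (t':ℕ) (t:ℕ) L (by omega) (by omega) (by omega)
            rw [← h'] at e1; omega
        · intro u u' h
          have hu : (u:ℕ) < ℓ := u.isLt; have hu' : (u':ℕ) < ℓ := u'.isLt
          have := hcolinj (u:ℕ) (u':ℕ) (by omega) (by omega) h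
          exact Fin.ext (by omega)
        · intro t u
          have ht : (t:ℕ) < ℓ := t.isLt; have hu : (u:ℕ) < ℓ := u.isLt
          simp only [Imat]
          split_ifs with h
          · rw [h]
            exact hd1 (u:ℕ) L (by omega) (by omega)
          · have hvne : (t:ℕ) ≠ (u:ℕ) := fun he => h (Fin.ext he)
            rcases Nat.lt_or_ge (u:ℕ) (t:ℕ) with hc | hc
            · exact (hpast (u:ℕ) (t:ℕ) L (by omega) (by omega) (by omega)).trans hA1
            · exact (hmid (t:ℕ) (u:ℕ) L (by omega) (by omega) (by omega)).trans hA3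
end

section
/- Let ℓ ≥ 2. There is a constant n₀ (depending only on ℓ) with the following property. Let A be an m-rowed simple 3-matrix containing no member of 𝒯_ℓ(3) \ 𝒯_ℓ(2) as a configuration, and let S be a set of rows of A such that: the restriction A|_S of A to the rows of S contains as a configuration the |S|×(|S|+1) matrix [𝟎 | I_{|S|}] consisting of a column of 0's followed by the |S|×|S| identity matrix I_{|S|}(1,0); and for every pair of rows i, j ∈ S, no column of A has entry 1 in both row i and row j. If |S| > n₀, then there exists a row i ∈ S such that: no two columns of A agree on all rows other than i and have entries 1 and 2 in row i, and no two columns of A agree on all rows other than i and have entries 0 and 2 in row i. -/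
/-- The `s × (s+1)` matrix `[𝟎 | I_s]`: a column of 0's followed by the `s×s`
identity matrix `I_s(1,0)`. -/
def zeroId (s : ℕ) : MatN s (s + 1) :=
  fun i j => if (j : ℕ) = 0 then 0 else if (j : ℕ) = (i : ℕ) + 1 then 1 else 0

lemma lemA (r : ℕ) : ∀ M : ℕ, ∃ N : ℕ, ∀ χ : Fin N → Fin N → ℕ, (∀ s t, χ s t < r) →
    ∃ (x : Fin M → Fin N) (col : Fin M → ℕ), StrictMono x ∧ (∀ a, col a < r) ∧
      ∀ a b : Fin M, a < b → χ (x a) (x b) = col a := by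
  intro M
  induction M with
  | zero =>
    exact ⟨0, fun χ hχ => ⟨Fin.elim0, Fin.elim0, fun a => a.elim0,
      fun a => a.elim0, fun a => a.elim0⟩⟩
  | succ M ih =>
    obtain ⟨N, hN⟩ := ih
    refine ⟨r * N + 1, fun χ hχ => ?_⟩
    rcases Nat.eq_zero_or_pos r with hr | hr
    · exact absurd (hχ 0 0) (by omega)
    set s : Finset (Fin (r * N + 1)) := Finset.univ.erase 0 with hs
    have hscard : s.card = r * N := by
      rw [hs, Finset.card_erase_of_mem (Finset.mem_univ 0)]
      simp
    have hmaps : ∀ y ∈ s, χ 0 y ∈ Finset.range r := fun y _ =>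
      Finset.mem_range.mpr (hχ 0 y)
    obtain ⟨e, hemem, hecard⟩ :=
      Finset.exists_le_card_fiber_of_mul_le_card_of_maps_to hmaps
        ⟨0, Finset.mem_range.mpr hr⟩ (by rw [hscard, Finset.card_range])
    obtain ⟨T, hTsub, hTcard⟩ := Finset.exists_subset_card_eq hecard
    set ι := T.orderEmbOfFin hTcard with hι
    have hιmem : ∀ a, ι a ∈ Finset.filter (fun x => χ 0 x = e) s := fun a =>
      hTsub (T.orderEmbOfFin_mem hTcard a)
    obtain ⟨x', col', hx'mono, hcol', hprop'⟩ := hN (fun a b => χ (ι a) (ι b))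
      (fun a b => hχ _ _)
    refine ⟨Fin.cons 0 (fun a => ι (x' a)), Fin.cons e col', ?_, ?_, ?_⟩
    · intro a b hab
      rcases Fin.eq_zero_or_eq_succ a with ha0 | ⟨a', ha'⟩ <;>
        rcases Fin.eq_zero_or_eq_succ b with hb0 | ⟨b', hb'⟩
      · subst ha0; subst hb0; exact absurd hab (lt_irrefl _)
      · subst ha0; subst hb'
        simp only [Fin.cons_zero, Fin.cons_succ]
        have := hιmem (x' b')
        rw [Finset.mem_filter, hs, Finset.mem_erase] at this
        exact Fin.pos_of_ne_zero this.1.1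
      · subst ha'; subst hb0; exact absurd hab (Fin.not_lt_zero _)
      · subst ha'; subst hb'
        simp only [Fin.cons_succ]
        exact ι.strictMono (hx'mono (Fin.succ_lt_succ_iff.mp hab))
    · intro a
      rcases Fin.eq_zero_or_eq_succ a with ha0 | ⟨a', ha'⟩
      · subst ha0; simpa using Finset.mem_range.mp hemem
      · subst ha'; simpa using hcol' a'
    · intro a b hab
      rcases Fin.eq_zero_or_eq_succ a with ha0 | ⟨a', ha'⟩ <;>
        rcases Fin.eq_zero_or_eq_succ b with hb0 | ⟨b', hb'⟩
      · subst ha0; subst hb0; exact absurd hab (lt_irrefl _)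
      · subst ha0; subst hb'
        simp only [Fin.cons_zero, Fin.cons_succ]
        have := hιmem (x' b')
        rw [Finset.mem_filter] at this
        exact this.2
      · subst ha'; subst hb0; exact absurd hab (Fin.not_lt_zero _)
      · subst ha'; subst hb'
        simp only [Fin.cons_succ]
        exact hprop' a' b' (Fin.succ_lt_succ_iff.mp hab)

lemma ramsey (r k : ℕ) (hr : 0 < r) : ∃ N : ℕ, ∀ χ : Fin N → Fin N → ℕ,
    (∀ s t, χ s t < r) → ∃ (y : Fin k → Fin N) (e : ℕ), StrictMono y ∧ e < r ∧
      ∀ a b : Fin k, a < b → χ (y a) (y b) = e := by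
  obtain ⟨N, hN⟩ := lemA r (r * k + 1)
  refine ⟨N, fun χ hχ => ?_⟩
  obtain ⟨x, col, hxmono, hcol, hprop⟩ := hN χ hχ
  have hmaps : ∀ a ∈ (Finset.univ : Finset (Fin (r * k + 1))), col a ∈ Finset.range r :=
    fun a _ => Finset.mem_range.mpr (hcol a)
  obtain ⟨e, hemem, hecard⟩ :=
    Finset.exists_le_card_fiber_of_mul_le_card_of_maps_to (n := k) hmaps
      ⟨0, Finset.mem_range.mpr hr⟩ (by simp)
  have hecard' : k ≤ (Finset.filter (fun a => col a = e) Finset.univ).card := hecard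
  set w := Finset.orderEmbOfCardLe _ hecard' with hw
  refine ⟨fun a => x (w a), e, fun a b hab => hxmono (w.strictMono hab),
    Finset.mem_range.mp hemem, fun a b hab => ?_⟩
  have hwa := Finset.orderEmbOfCardLe_mem _ hecard' a
  rw [Finset.mem_filter] at hwa
  rw [hprop (w a) (w b) (w.strictMono hab), hwa.2]

lemma mem_helper {ℓ : ℕ} (F : MatN ℓ ℓ) (a b : ℕ) (ha : a < 3) (hb : b < 3) (hab : a ≠ b)
    (hF : F = Imat ℓ a b ∨ F = Tmat ℓ a b) (i j : Fin ℓ) (h2 : F i j = 2) :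
    (⟨ℓ, ℓ, F⟩ : CMat) ∈ TFam ℓ 3 \ TFam ℓ 2 := by
  constructor
  · refine ⟨a, b, ha, hb, hab, ?_⟩
    rcases hF with h | h
    · exact Or.inl (by rw [h])
    · exact Or.inr (by rw [h])
  · rintro ⟨a', b', ha', hb', -, (hM | hM)⟩ <;>
    · simp only [CMat.mk.injEq, heq_eq_eq, true_and] at hM
      rw [hM] at h2
      simp only [Imat, Tmat] at h2
      split_ifs at h2 <;> omega

/-- For `ℓ ≥ 2` there is `n₀` such that: if `A` is an `m`-rowed simple
3-matrix avoiding `𝒯_ℓ(3) \ 𝒯_ℓ(2)`, and `S` is a set of rows of `A` such that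
`[𝟎 | I_{|S|}] ≺ A|_S` and no column of `A` has a 1 in two rows of `S`, and
`|S| > n₀`, then some row `i ∈ S` is such that no two columns of `A` agree outside
row `i` with entries `1, 2` in row `i`, and no two columns agree outside row `i`
with entries `0, 2` in row `i`. -/
theorem stmt18 (ℓ : ℕ) (hℓ : 2 ≤ ℓ) :
    ∃ n₀ : ℕ, ∀ (m n : ℕ) (A : MatN m n), RMat 3 A → SimpleM A →
      AvoidsFam A (TFam ℓ 3 \ TFam ℓ 2) →
      ∀ S : Finset (Fin m),
        (∃ (f : Fin S.card → Fin m) (g : Fin (S.card + 1) → Fin n),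
          Function.Injective f ∧ Function.Injective g ∧ (∀ a, f a ∈ S) ∧
          ∀ a b, A (f a) (g b) = zeroId S.card a b) →
        (∀ i ∈ S, ∀ j ∈ S, i ≠ j → ∀ c : Fin n, ¬ (A i c = 1 ∧ A j c = 1)) →
        n₀ < S.card →
        ∃ i ∈ S,
          (¬ ∃ j₁ j₂ : Fin n, (∀ i' : Fin m, i' ≠ i → A i' j₁ = A i' j₂) ∧
            A i j₁ = 1 ∧ A i j₂ = 2) ∧
          (¬ ∃ j₁ j₂ : Fin n, (∀ i' : Fin m, i' ≠ i → A i' j₁ = A i' j₂) ∧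
            A i j₁ = 0 ∧ A i j₂ = 2) := by
  obtain ⟨N, hRam⟩ := ramsey 9 (2 * ℓ) (by norm_num)
  refine ⟨N, ?_⟩
  intro m n A hR _hSimp hAv S _hzero h1 hcard
  by_contra hcon
  have hP : ∀ i ∈ S, ∃ j₁ j₂ : Fin n,
      (∀ i' : Fin m, i' ≠ i → A i' j₁ = A i' j₂) ∧ A i j₂ = 2 ∧ A i j₁ < 2 := by
    intro i hi
    by_contra hno
    apply hcon
    refine ⟨i, hi, ?_, ?_⟩ <;> rintro ⟨j₁, j₂, hag, h₁, h₂⟩ <;>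
      exact hno ⟨j₁, j₂, hag, h₂, by omega⟩
  have hScard : 0 < S.card := by omega
  obtain ⟨i₀, hi₀⟩ := Finset.card_pos.mp hScard
  obtain ⟨j₀, -⟩ := hP i₀ hi₀
  have H : ∀ i : Fin m, ∃ j₁ j₂ : Fin n, i ∈ S →
      (∀ i' : Fin m, i' ≠ i → A i' j₁ = A i' j₂) ∧ A i j₂ = 2 ∧ A i j₁ < 2 := by
    intro i
    by_cases hi : i ∈ S
    · obtain ⟨j₁, j₂, h⟩ := hP i hi; exact ⟨j₁, j₂, fun _ => h⟩
    · exact ⟨j₀, j₀, fun h => absurd h hi⟩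
  choose dc cc hpr using H
  have hle : N ≤ S.card := le_of_lt hcard
  set R0 : Fin N → Fin m := fun t => S.orderEmbOfCardLe hle t with hR0def
  have hχ : ∀ s t : Fin N, 3 * A (R0 s) (cc (R0 t)) + A (R0 t) (cc (R0 s)) < 9 := by
    intro s t
    have h1' := hR (R0 s) (cc (R0 t)); have h2' := hR (R0 t) (cc (R0 s)); omega
  obtain ⟨y, e, hy, he9, hmono⟩ := hRam _ hχ
  set Row : Fin (2 * ℓ) → Fin m := fun a => R0 (y a) with hRowdef
  have hRowS : ∀ a, Row a ∈ S := fun a => S.orderEmbOfCardLe_mem hle (y a)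
  have hRowInj : Function.Injective Row := fun a b h =>
    hy.injective ((S.orderEmbOfCardLe hle).injective h)
  have hpr' := fun a => hpr (Row a) (hRowS a)
  have hdiag : ∀ a, A (Row a) (cc (Row a)) = 2 := fun a => (hpr' a).2.1
  have hdlt : ∀ a, A (Row a) (dc (Row a)) < 2 := fun a => (hpr' a).2.2
  have hagree : ∀ a, ∀ i' : Fin m, i' ≠ Row a → A i' (dc (Row a)) = A i' (cc (Row a)) :=
    fun a => (hpr' a).1
  have huv : ∀ a b : Fin (2 * ℓ), a < b →
      A (Row a) (cc (Row b)) = e / 3 ∧ A (Row b) (cc (Row a)) = e % 3 := by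
    intro a b hab
    have h : 3 * A (Row a) (cc (Row b)) + A (Row b) (cc (Row a)) = e := hmono a b hab
    have h1' := hR (Row a) (cc (Row b))
    have h2' := hR (Row b) (cc (Row a))
    constructor <;> omega
  set u := e / 3 with hudef
  set v := e % 3 with hvdef
  have hℓ0 : (0:ℕ) < ℓ := by omega
  have hb0 : (0:ℕ) < 2 * ℓ := by omega
  have hb1 : (1:ℕ) < 2 * ℓ := by omega
  have hb2 : (2:ℕ) < 2 * ℓ := by omega
  rcases (by omega : u = 1 ∨ v = 1 ∨ (u = 0 ∧ v = 0) ∨ (u = 2 ∧ v = 0) ∨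
      (u = 0 ∧ v = 2) ∨ (u = 2 ∧ v = 2)) with
    hc | hc | ⟨hu0, hv0⟩ | ⟨hu2, hv0⟩ | ⟨hu0, hv2⟩ | ⟨hu2, hv2⟩
  · -- u = 1 : two 1's in column cc (Row 2)
    exact h1 (Row ⟨0, hb0⟩) (hRowS _) (Row ⟨1, hb1⟩) (hRowS _)
      (fun h => by have := hRowInj h; simp [Fin.ext_iff] at this)
      (cc (Row ⟨2, hb2⟩))
      ⟨((huv ⟨0, hb0⟩ ⟨2, hb2⟩ (Fin.mk_lt_mk.mpr (by omega))).1).trans hc,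
       ((huv ⟨1, hb1⟩ ⟨2, hb2⟩ (Fin.mk_lt_mk.mpr (by omega))).1).trans hc⟩
  · -- v = 1 : two 1's in column cc (Row 0)
    exact h1 (Row ⟨1, hb1⟩) (hRowS _) (Row ⟨2, hb2⟩) (hRowS _)
      (fun h => by have := hRowInj h; simp [Fin.ext_iff] at this)
      (cc (Row ⟨0, hb0⟩))
      ⟨((huv ⟨0, hb0⟩ ⟨1, hb1⟩ (Fin.mk_lt_mk.mpr (by omega))).2).trans hc,
       ((huv ⟨0, hb0⟩ ⟨2, hb2⟩ (Fin.mk_lt_mk.mpr (by omega))).2).trans hc⟩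
  · -- (u,v) = (0,0) : Imat ℓ 2 0
    refine hAv ⟨ℓ, ℓ, Imat ℓ 2 0⟩
      (mem_helper _ 2 0 (by omega) (by omega) (by omega) (Or.inl rfl)
        ⟨0, hℓ0⟩ ⟨0, hℓ0⟩ (by simp [Imat])) ?_
    show IsConfig (Imat ℓ 2 0) A
    have hcast : ∀ i : Fin ℓ, (i.1 : ℕ) < 2 * ℓ := fun i => by omega
    set ff : Fin ℓ → Fin (2 * ℓ) := fun i => ⟨i.1, hcast i⟩ with hffdef
    have hfflt : ∀ i j : Fin ℓ, i.1 < j.1 → ff i < ff j := fun i j h => by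
      rw [hffdef]; exact Fin.mk_lt_mk.mpr h
    refine ⟨fun i => Row (ff i), fun i => cc (Row (ff i)), ?_, ?_, ?_⟩
    · intro i j hij
      have := hRowInj hij
      rw [hffdef] at this
      exact Fin.ext (by simpa [Fin.ext_iff] using this)
    · intro i j hij
      dsimp only at hij
      by_contra hne
      have hne' : i.1 ≠ j.1 := fun h => hne (Fin.ext h)
      rcases Nat.lt_or_ge i.1 j.1 with h | h
      · have h2 := (huv (ff i) (ff j) (hfflt i j h)).1
        rw [← hij, hdiag] at h2; omega
      · have h2 := (huv (ff j) (ff i) (hfflt j i (by omega))).2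
        rw [← hij, hdiag] at h2; omega
    · intro i j
      by_cases hij : i = j
      · subst hij; simp only [Imat, if_pos rfl]; exact hdiag _
      · have hij' : i.1 ≠ j.1 := fun h => hij (Fin.ext h)
        simp only [Imat, if_neg hij]
        rcases Nat.lt_or_ge i.1 j.1 with h | h
        · exact ((huv (ff i) (ff j) (hfflt i j h)).1).trans hu0
        · exact ((huv (ff j) (ff i) (hfflt j i (by omega))).2).trans hv0
  · -- (u,v) = (2,0) : Tmat ℓ 0 2 directly
    refine hAv ⟨ℓ, ℓ, Tmat ℓ 0 2⟩
      (mem_helper _ 0 2 (by omega) (by omega) (by omega) (Or.inr rfl)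
        ⟨0, hℓ0⟩ ⟨0, hℓ0⟩ (by simp [Tmat])) ?_
    show IsConfig (Tmat ℓ 0 2) A
    have hcast : ∀ i : Fin ℓ, (i.1 : ℕ) < 2 * ℓ := fun i => by omega
    set ff : Fin ℓ → Fin (2 * ℓ) := fun i => ⟨i.1, hcast i⟩ with hffdef
    have hfflt : ∀ i j : Fin ℓ, i.1 < j.1 → ff i < ff j := fun i j h => by
      rw [hffdef]; exact Fin.mk_lt_mk.mpr h
    refine ⟨fun i => Row (ff i), fun i => cc (Row (ff i)), ?_, ?_, ?_⟩
    · intro i j hij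
      have := hRowInj hij
      rw [hffdef] at this
      exact Fin.ext (by simpa [Fin.ext_iff] using this)
    · intro i j hij
      dsimp only at hij
      by_contra hne
      have hne' : i.1 ≠ j.1 := fun h => hne (Fin.ext h)
      rcases Nat.lt_or_ge i.1 j.1 with h | h
      · have h2 := (huv (ff i) (ff j) (hfflt i j h)).2
        rw [hij, hdiag] at h2; omega
      · have h2 := (huv (ff j) (ff i) (hfflt j i (by omega))).2
        rw [← hij, hdiag] at h2; omega
    · intro i j
      rcases Nat.lt_trichotomy j.1 i.1 with h | h | h
      · simp only [Tmat, if_pos h]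
        exact ((huv (ff j) (ff i) (hfflt j i h)).2).trans hv0
      · have : i = j := Fin.ext h.symm
        subst this
        simp only [Tmat, if_neg (lt_irrefl _)]
        exact hdiag _
      · simp only [Tmat, if_neg (by omega : ¬ (j.1 : ℕ) < (i.1 : ℕ))]
        exact ((huv (ff i) (ff j) (hfflt i j h)).1).trans hu2
  · -- (u,v) = (0,2) : Tmat ℓ 0 2 via reversal
    refine hAv ⟨ℓ, ℓ, Tmat ℓ 0 2⟩
      (mem_helper _ 0 2 (by omega) (by omega) (by omega) (Or.inr rfl)
        ⟨0, hℓ0⟩ ⟨0, hℓ0⟩ (by simp [Tmat])) ?_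
    show IsConfig (Tmat ℓ 0 2) A
    have hcast : ∀ i : Fin ℓ, ℓ - 1 - (i.1 : ℕ) < 2 * ℓ := fun i => by omega
    set ff : Fin ℓ → Fin (2 * ℓ) := fun i => ⟨ℓ - 1 - i.1, hcast i⟩ with hffdef
    have hfflt : ∀ i j : Fin ℓ, i.1 < j.1 → ff j < ff i := fun i j h => by
      rw [hffdef]
      exact Fin.mk_lt_mk.mpr (by have := i.isLt; have := j.isLt; omega)
    refine ⟨fun i => Row (ff i), fun i => cc (Row (ff i)), ?_, ?_, ?_⟩
    · intro i j hij
      have := hRowInj hij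
      rw [hffdef] at this
      have h' : ℓ - 1 - i.1 = ℓ - 1 - j.1 := by simpa [Fin.ext_iff] using this
      have := i.isLt; have := j.isLt
      exact Fin.ext (by omega)
    · intro i j hij
      dsimp only at hij
      by_contra hne
      have hne' : i.1 ≠ j.1 := fun h => hne (Fin.ext h)
      rcases Nat.lt_or_ge i.1 j.1 with h | h
      · have h2 := (huv (ff j) (ff i) (hfflt i j h)).1
        rw [hij, hdiag] at h2; omega
      · have h2 := (huv (ff i) (ff j) (hfflt j i (by omega))).1
        rw [← hij, hdiag] at h2; omega
    · intro i j
      rcases Nat.lt_trichotomy j.1 i.1 with h | h | h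
      · simp only [Tmat, if_pos h]
        exact ((huv (ff i) (ff j) (hfflt j i h)).1).trans hu0
      · have : i = j := Fin.ext h.symm
        subst this
        simp only [Tmat, if_neg (lt_irrefl _)]
        exact hdiag _
      · simp only [Tmat, if_neg (by omega : ¬ (j.1 : ℕ) < (i.1 : ℕ))]
        exact ((huv (ff j) (ff i) (hfflt i j h)).2).trans hv2
  · -- (u,v) = (2,2) : use the d-columns, Imat ℓ e' 2
    have hmaps2 : ∀ a ∈ (Finset.univ : Finset (Fin (2 * ℓ))),
        A (Row a) (dc (Row a)) ∈ Finset.range 2 :=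
      fun a _ => Finset.mem_range.mpr (hdlt a)
    obtain ⟨e', he'mem, he'card⟩ :=
      Finset.exists_le_card_fiber_of_mul_le_card_of_maps_to (n := ℓ) hmaps2
        ⟨0, by simp⟩ (by simp)
    set w := Finset.orderEmbOfCardLe _ he'card with hwdef
    have hwmem : ∀ i : Fin ℓ, A (Row (w i)) (dc (Row (w i))) = e' := fun i => by
      have := Finset.orderEmbOfCardLe_mem _ he'card i
      rw [Finset.mem_filter] at this
      exact this.2
    have he'2 : e' < 2 := Finset.mem_range.mp he'mem
    have hoff : ∀ i j : Fin ℓ, i ≠ j → A (Row (w i)) (dc (Row (w j))) = 2 := by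
      intro i j hij
      have hwne : Row (w i) ≠ Row (w j) := fun h => hij (w.injective (hRowInj h))
      rw [hagree (w j) _ hwne]
      rcases lt_or_gt_of_ne (fun h : w i = w j => hij (w.injective h)) with h | h
      · exact ((huv _ _ h).1).trans hu2
      · exact ((huv _ _ h).2).trans hv2
    refine hAv ⟨ℓ, ℓ, Imat ℓ e' 2⟩
      (mem_helper _ e' 2 (by omega) (by omega) (by omega) (Or.inl rfl)
        ⟨0, hℓ0⟩ ⟨1, hℓ⟩ (by simp [Imat, Fin.ext_iff])) ?_
    show IsConfig (Imat ℓ e' 2) A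
    refine ⟨fun i => Row (w i), fun i => dc (Row (w i)),
      fun i j h => w.injective (hRowInj h), ?_, ?_⟩
    · intro i j hij
      dsimp only at hij
      by_contra hne
      have h2 := hoff i j hne
      rw [← hij, hwmem i] at h2; omega
    · intro i j
      by_cases hij : i = j
      · subst hij; simp only [Imat, if_pos rfl]; exact hwmem _
      · simp only [Imat, if_neg hij]
        exact hoff i j hij
end
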